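/- arXiv:1701.05527 — 7 statements merged into one kernel-verified Lean document; each statement's English description precedes it below -/
import Mathlib

section
/- Let V be a finite dimensional vector space over a field F, T an endomorphism of V, and T* its adjoint acting on the dual space V*. Then the bilinear map sending (Tv, T*λ) to λ(Tv) = (T*λ)(v) is a well-defined perfect (nondegenerate) pairing between the image of T and the image of T*. -/
/-- For a finite dimensional vector space `V` over a field `F`, an endomorphism
`T` and its adjoint (dual map) `T*` on `V* = Module.Dual F V`, the bilinear map sending
`(T v, T* λ)` to `λ (T v) = (T* λ) v` is a well-defined perfect pairing between the image
of `T` and the image of `T*`. -/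
theorem stmt0 (F V : Type*) [Field F] [AddCommGroup V] [Module F V] [FiniteDimensional F V]
    (T : V →ₗ[F] V) :
    -- well-definedness
    (∀ (v v' : V) (l l' : Module.Dual F V), T v = T v' → T.dualMap l = T.dualMap l' →
        l (T v) = l' (T v')) ∧
    -- perfectness: nondegeneracy in the first variable
    (∀ v : V, (∀ l : Module.Dual F V, l (T v) = 0) → T v = 0) ∧
    -- perfectness: nondegeneracy in the second variable
    (∀ l : Module.Dual F V, (∀ v : V, l (T v) = 0) → T.dualMap l = 0) := by
  refine ⟨?_, ?_, ?_⟩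
  · intro v v' l l' hv hl
    have h1 : l (T v) = (T.dualMap l) v := rfl
    have h2 : (T.dualMap l') v = l' (T v) := rfl
    rw [h1, hl, h2, hv]
  · intro v h
    exact (Module.forall_dual_apply_eq_zero_iff F (T v)).mp h
  · intro l h
    ext v
    exact h v
end

section
/- Let W be an increasing filtration of a finite dimensional vector space V over a field K of characteristic zero, and let 𝒴(W) be the set of gradings of W, i.e. semisimple endomorphisms Y with integer eigenvalues such that W_k = E_k(Y) ⊕ W_{k-1} for all k. Then the group exp(W_{-1}gl(V)) acts simply transitively on 𝒴(W) by conjugation, where W_{-1}gl(V) is the set of endomorphisms α with α(W_k) ⊆ W_{k-1} for all k. -/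
/-- Exponential of a (nilpotent) endomorphism, as a finite sum `∑_{i < n} αⁱ/i!`.
For `α` nilpotent on a finite dimensional space and `n = finrank + 1` this is the
usual exponential `e^α`. -/
noncomputable def expNil {K V : Type*} [Field K] [AddCommGroup V] [Module K V]
    (n : ℕ) (α : Module.End K V) : Module.End K V :=
  ∑ i ∈ Finset.range n, ((i.factorial : K)⁻¹) • α ^ i


section FltBasics

variable {K V : Type*} [Field K] [AddCommGroup V] [Module K V]

/-- `α` lowers the filtration `W` by `m` steps. -/
def Flt (W : ℤ → Submodule K V) (m : ℤ) (α : Module.End K V) : Prop :=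
  ∀ k : ℤ, ∀ v ∈ W k, α v ∈ W (k - m)

variable {W : ℤ → Submodule K V} {m m' m₁ m₂ : ℤ} {α β : Module.End K V}

theorem flt_zero : Flt W m (0 : Module.End K V) := fun k v _ => by
  simpa using Submodule.zero_mem _

theorem Flt.add (ha : Flt W m α) (hb : Flt W m β) : Flt W m (α + β) := fun k v hv => by
  simpa using Submodule.add_mem _ (ha k v hv) (hb k v hv)

theorem Flt.neg (ha : Flt W m α) : Flt W m (-α) := fun k v hv => by
  simpa using Submodule.neg_mem _ (ha k v hv)

theorem Flt.sub (ha : Flt W m α) (hb : Flt W m β) : Flt W m (α - β) := fun k v hv => by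
  simpa [sub_eq_add_neg] using Submodule.add_mem _ (ha k v hv) (Submodule.neg_mem _ (hb k v hv))

theorem Flt.smul (ha : Flt W m α) (c : K) : Flt W m (c • α) := fun k v hv => by
  simpa using Submodule.smul_mem _ c (ha k v hv)

theorem Flt.sum {ι : Type*} {s : Finset ι} {f : ι → Module.End K V}
    (h : ∀ i ∈ s, Flt W m (f i)) : Flt W m (∑ i ∈ s, f i) := fun k v hv => by
  rw [LinearMap.sum_apply]
  exact Submodule.sum_mem _ fun i hi => h i hi k v hv

theorem Flt.mul (ha : Flt W m₁ α) (hb : Flt W m₂ β) : Flt W (m₁ + m₂) (α * β) :=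
  fun k v hv => by
    have h := ha (k - m₂) (β v) (hb k v hv)
    rwa [show k - m₂ - m₁ = k - (m₁ + m₂) by ring, ← Module.End.mul_apply] at h

theorem Flt.mono (hW : Monotone W) (h : m ≤ m') (ha : Flt W m' α) : Flt W m α :=
  fun k v hv => hW (by omega : k - m' ≤ k - m) (ha k v hv)

theorem Flt.pow (ha : Flt W 1 α) : ∀ i : ℕ, Flt W (i : ℤ) (α ^ i) := by
  intro i
  induction i with
  | zero => intro k v hv; simpa using hv
  | succ i ih =>
    have := ih.mul ha
    rw [← pow_succ] at this
    intro k v hv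
    have h2 := this k v hv
    rwa [show k - ((i : ℤ) + 1) = k - ((i : ℕ) + 1 : ℕ) by push_cast; ring] at h2

theorem Flt.eq_zero {a b : ℤ} (ha : ∀ k ≤ a, W k = ⊥) (hb : ∀ k, b ≤ k → W k = ⊤)
    (hm : b - m ≤ a) (h : Flt W m α) : α = 0 := by
  ext v
  have hv : v ∈ W b := by rw [hb b le_rfl]; trivial
  have h2 := h b v hv
  rw [ha _ hm] at h2
  simpa using h2

theorem filt_ind {a : ℤ} (ha : ∀ k ≤ a, W k = ⊥)
    {E C : ℤ → Submodule K V} (hWE : ∀ k, E k ⊔ W (k - 1) = W k)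
    (hC : ∀ k, C (k - 1) ≤ C k) (hE : ∀ k, E k ≤ C k) : ∀ k, W k ≤ C k := by
  have main : ∀ k, a ≤ k → W k ≤ C k := by
    intro k hk
    refine Int.le_induction (motive := fun k _ => W k ≤ C k) ?_ ?_ k hk
    · show W a ≤ C a
      rw [ha a le_rfl]; exact bot_le
    · intro k _ ih
      show W (k+1) ≤ C (k+1)
      rw [← hWE (k + 1)]
      refine sup_le (hE _) ?_
      have h1 := hC (k + 1)
      rw [show k + 1 - 1 = k by ring] at h1 ⊢
      exact ih.trans h1
  intro k
  rcases le_total k a with h | h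
  · rw [ha k h]; exact bot_le
  · exact main k h

end FltBasics

section Grading

variable {K V : Type*} [Field K] [AddCommGroup V] [Module K V]
variable {W : ℤ → Submodule K V} {a : ℤ} {Y Y' : Module.End K V}

theorem grading_stable (ha : ∀ k ≤ a, W k = ⊥) (hmono : Monotone W)
    (hsup : ∀ k : ℤ, Module.End.eigenspace Y ((k : K)) ⊔ W (k - 1) = W k) :
    ∀ k, ∀ v ∈ W k, Y v ∈ W k := by
  have h := filt_ind ha hsup (C := fun k => Submodule.comap Y (W k))
    (fun k => Submodule.comap_mono (hmono (by omega)))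
    (fun k e he => by
      have h1 : Y e = ((k : K)) • e := Module.End.mem_eigenspace_iff.mp he
      have he' : e ∈ W k := (le_sup_left.trans (hsup k).le) he
      simp only [Submodule.mem_comap, h1]
      exact Submodule.smul_mem _ _ he')
  exact fun k v hv => h k hv

theorem grading_diff (ha : ∀ k ≤ a, W k = ⊥) (hmono : Monotone W)
    (hsupY : ∀ k : ℤ, Module.End.eigenspace Y ((k : K)) ⊔ W (k - 1) = W k)
    (hsupY' : ∀ k : ℤ, Module.End.eigenspace Y' ((k : K)) ⊔ W (k - 1) = W k) :
    Flt W 1 (Y - Y') := by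
  have hst' := grading_stable ha hmono hsupY'
  have h := filt_ind ha hsupY (C := fun k => Submodule.comap (Y - Y') (W (k - 1)))
    (fun k => Submodule.comap_mono (hmono (by omega)))
    (fun k e he => by
      have hYe : Y e = ((k : K)) • e := Module.End.mem_eigenspace_iff.mp he
      have he' : e ∈ W k := (le_sup_left.trans (hsupY k).le) he
      rw [← hsupY' k] at he'
      obtain ⟨e', he'', w, hw, hsum⟩ := Submodule.mem_sup.mp he'
      have hY'e' : Y' e' = ((k : K)) • e' := Module.End.mem_eigenspace_iff.mp he''
      have hcalc : (Y - Y') e = ((k : K)) • w - Y' w := by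
        have he2 : e = e' + w := hsum.symm
        rw [LinearMap.sub_apply, hYe]
        conv_lhs => rw [he2]
        rw [map_add, hY'e', smul_add]
        abel
      simp only [Submodule.mem_comap, hcalc]
      exact Submodule.sub_mem _ (Submodule.smul_mem _ _ hw) (hst' _ w hw))
  exact fun k v hv => h k hv

theorem grading_ad (ha : ∀ k ≤ a, W k = ⊥) (hmono : Monotone W)
    (hsupY : ∀ k : ℤ, Module.End.eigenspace Y ((k : K)) ⊔ W (k - 1) = W k)
    {m : ℤ} {δ : Module.End K V} (hδ : Flt W m δ) :
    Flt W (m + 1) (δ * Y - Y * δ - ((m : K)) • δ) := by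
  have hst := grading_stable ha hmono hsupY
  have h := filt_ind ha hsupY
    (C := fun k => Submodule.comap (δ * Y - Y * δ - ((m : K)) • δ) (W (k - (m + 1))))
    (fun k => Submodule.comap_mono (hmono (by omega)))
    (fun k e he => by
      have hYe : Y e = ((k : K)) • e := Module.End.mem_eigenspace_iff.mp he
      have he' : e ∈ W k := (le_sup_left.trans (hsupY k).le) he
      have hδe : δ e ∈ W (k - m) := hδ k e he'
      rw [← hsupY (k - m)] at hδe
      obtain ⟨f, hf, w, hw, hsum⟩ := Submodule.mem_sup.mp hδe
      have hYf : Y f = (((k - m : ℤ)) : K) • f := Module.End.mem_eigenspace_iff.mp hf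
      have hde : δ e = f + w := hsum.symm
      have hcalc : (δ * Y - Y * δ - ((m : K)) • δ) e = ((k : K) - (m : K)) • w - Y w := by
        simp only [LinearMap.sub_apply, LinearMap.smul_apply, Module.End.mul_apply]
        rw [hYe, map_smul, hde, map_add, hYf]
        push_cast
        module
      simp only [Submodule.mem_comap, hcalc]
      rw [show k - (m + 1) = k - m - 1 by ring]
      exact Submodule.sub_mem _ (Submodule.smul_mem _ _ hw) (hst _ w hw))
  exact fun k v hv => h k hv

end Grading

section Exp

open Polynomial Finset

variable {K V : Type*} [Field K] [CharZero K] [AddCommGroup V] [Module K V]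
variable {W : ℤ → Submodule K V} {α β : Module.End K V}

theorem expNil_zero {n : ℕ} (hn : 1 ≤ n) : expNil n (0 : Module.End K V) = 1 := by
  rw [expNil, Finset.sum_eq_single 0]
  · simp
  · intro i _ h0
    simp [zero_pow h0]
  · intro h
    exact absurd (Finset.mem_range.mpr hn) h

theorem expNil_sub_one (hmono : Monotone W) {n : ℕ} (hn : 1 ≤ n) (hα : Flt W 1 α) :
    Flt W 1 (expNil n α - 1) := by
  have h1 : expNil n α - 1 = ∑ i ∈ Finset.Ico 1 n, ((i.factorial : K)⁻¹) • α ^ i := by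
    rw [expNil, Finset.range_eq_Ico,
      ← Finset.sum_Ico_consecutive _ (Nat.zero_le 1) hn]
    have h0 : ∑ i ∈ Finset.Ico 0 1, ((i.factorial : K)⁻¹) • α ^ i = 1 := by
      simp
    rw [h0, add_sub_cancel_left]
  rw [h1]
  refine Flt.sum fun i hi => ?_
  have h1i : 1 ≤ i := (Finset.mem_Ico.mp hi).1
  exact ((hα.pow i).smul _).mono hmono (by exact_mod_cast h1i)

theorem pow_sub_flt (hmono : Monotone W) {m : ℤ}
    (hα : Flt W 1 α) (hβ : Flt W 1 β) (hs : Flt W m (α - β)) :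
    ∀ i : ℕ, Flt W (m + i) (α ^ (i + 1) - β ^ (i + 1)) := by
  intro i
  induction i with
  | zero => simpa using hs
  | succ i ih =>
    have h2 : α ^ (i + 2) - β ^ (i + 2)
        = α ^ (i + 1) * (α - β) + (α ^ (i + 1) - β ^ (i + 1)) * β := by
      noncomm_ring
    rw [show i + 1 + 1 = i + 2 by omega, h2]
    refine Flt.add ?_ ?_
    · exact ((hα.pow (i + 1)).mul hs).mono hmono (by push_cast; omega)
    · exact (ih.mul hβ).mono hmono (by push_cast; omega)

theorem expNil_key (hmono : Monotone W) {n : ℕ} (hn : 2 ≤ n) {m : ℤ}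
    (hα : Flt W 1 α) (hβ : Flt W 1 β) (hs : Flt W m (α - β)) :
    Flt W (m + 1) (expNil n α - expNil n β - (α - β)) := by
  have h1 : expNil n α - expNil n β - (α - β)
      = ∑ i ∈ Finset.Ico 2 n, ((i.factorial : K)⁻¹) • (α ^ i - β ^ i) := by
    rw [expNil, expNil, ← Finset.sum_sub_distrib]
    simp_rw [← smul_sub]
    rw [Finset.range_eq_Ico, ← Finset.sum_Ico_consecutive _ (Nat.zero_le 2) hn]
    have h0 : ∑ i ∈ Finset.Ico 0 2, ((i.factorial : K)⁻¹) • (α ^ i - β ^ i) = α - β := by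
      rw [show Finset.Ico 0 2 = {0, 1} from rfl, Finset.sum_pair (by decide)]
      simp
    rw [h0]
    abel
  rw [h1]
  refine Flt.sum fun i hi => ?_
  obtain ⟨h2i, _⟩ := Finset.mem_Ico.mp hi
  obtain ⟨j, rfl⟩ := Nat.exists_eq_add_of_le h2i
  have hp := (pow_sub_flt hmono hα hβ hs (j + 1)).smul ((((j + 1) + 1).factorial : K)⁻¹)
  rw [show j + 1 + 1 = 2 + j by omega] at hp
  exact hp.mono hmono (by push_cast; omega)

theorem expNil_mul_neg {n : ℕ} (hα : α ^ n = 0) :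
    expNil n α * expNil n (-α) = 1 := by
  classical
  set P : Polynomial K := ∑ i ∈ Finset.range n, Polynomial.C ((i.factorial : K)⁻¹) * X ^ i with hP
  set Q : Polynomial K :=
    ∑ i ∈ Finset.range n, Polynomial.C ((-1) ^ i * (i.factorial : K)⁻¹) * X ^ i with hQ
  have hPa : Polynomial.aeval α P = expNil n α := by
    rw [hP, map_sum, expNil]
    refine Finset.sum_congr rfl fun i _ => ?_
    rw [map_mul, Polynomial.aeval_C, map_pow, Polynomial.aeval_X, Algebra.smul_def]
  have hQa : Polynomial.aeval α Q = expNil n (-α) := by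
    rw [hQ, map_sum, expNil]
    refine Finset.sum_congr rfl fun i _ => ?_
    rw [map_mul, Polynomial.aeval_C, map_pow, Polynomial.aeval_X]
    have hneg : (-α) ^ i = (-1 : K) ^ i • α ^ i := by
      rw [show -α = (-1 : K) • α by simp, _root_.smul_pow]
    rw [mul_comm ((-1 : K) ^ i) ((i.factorial : K)⁻¹), hneg, smul_smul, Algebra.smul_def]
  have hPc : ∀ d, P.coeff d = if d < n then (d.factorial : K)⁻¹ else 0 := by
    intro d
    rw [hP, Polynomial.finset_sum_coeff]
    simp only [Polynomial.coeff_C_mul, Polynomial.coeff_X_pow, mul_ite, mul_one, mul_zero]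
    rw [Finset.sum_ite_eq (Finset.range n) d]
    simp [Finset.mem_range]
  have hQc : ∀ d, Q.coeff d = if d < n then (-1 : K) ^ d * (d.factorial : K)⁻¹ else 0 := by
    intro d
    rw [hQ, Polynomial.finset_sum_coeff]
    simp only [Polynomial.coeff_C_mul, Polynomial.coeff_X_pow, mul_ite, mul_one, mul_zero]
    rw [Finset.sum_ite_eq (Finset.range n) d]
    simp [Finset.mem_range]
  have key : ∀ d, d < n → (P * Q).coeff d = if d = 0 then 1 else 0 := by
    intro d hd
    rw [Polynomial.coeff_mul, Finset.Nat.sum_antidiagonal_eq_sum_range_succ_mk]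
    have hterm : ∀ i ∈ Finset.range (d + 1), P.coeff i * Q.coeff (d - i)
        = (-1 : K) ^ (d - i) * ((i.factorial : K)⁻¹ * (((d - i).factorial : K)⁻¹)) := by
      intro i hi
      have hi' : i ≤ d := Nat.lt_succ_iff.mp (Finset.mem_range.mp hi)
      rw [hPc, hQc, if_pos (lt_of_le_of_lt hi' hd), if_pos (lt_of_le_of_lt (Nat.sub_le d i) hd)]
      ring
    rw [Finset.sum_congr rfl hterm]
    rcases Nat.eq_zero_or_pos d with rfl | hd0
    · simp
    · rw [if_neg hd0.ne']
      have hfac : ∀ i ≤ d, ((i.factorial : K)⁻¹ * (((d - i).factorial : K)⁻¹))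
          = (d.choose i : K) * ((d.factorial : K)⁻¹) := by
        intro i hi
        have h := Nat.choose_mul_factorial_mul_factorial hi
        have hc : ((d.choose i : K)) * (i.factorial : K) * (((d - i).factorial : K))
            = (d.factorial : K) := by exact_mod_cast congrArg (Nat.cast : ℕ → K) h
        have h1 : (i.factorial : K) ≠ 0 := Nat.cast_ne_zero.mpr (Nat.factorial_ne_zero _)
        have h2 : (((d - i).factorial : K)) ≠ 0 := Nat.cast_ne_zero.mpr (Nat.factorial_ne_zero _)
        have h3 : ((d.factorial : K)) ≠ 0 := Nat.cast_ne_zero.mpr (Nat.factorial_ne_zero _)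
        have h4 : (d.choose i : K) ≠ 0 := Nat.cast_ne_zero.mpr (Nat.choose_pos hi).ne'
        rw [← hc]
        field_simp
      have hsign : ∀ i ≤ d, (-1 : K) ^ (d - i) = (-1 : K) ^ d * (-1 : K) ^ i := by
        intro i hi
        rw [← pow_add, show d + i = (d - i) + 2 * i by omega, pow_add, pow_mul]
        simp
      calc ∑ i ∈ Finset.range (d + 1),
            (-1 : K) ^ (d - i) * ((i.factorial : K)⁻¹ * (((d - i).factorial : K)⁻¹))
          = ((-1 : K) ^ d * (d.factorial : K)⁻¹)
            * ∑ i ∈ Finset.range (d + 1), ((-1 : K) ^ i * (d.choose i : K)) := by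
            rw [Finset.mul_sum]
            refine Finset.sum_congr rfl fun i hi => ?_
            have hi' : i ≤ d := Nat.lt_succ_iff.mp (Finset.mem_range.mp hi)
            rw [hfac i hi', hsign i hi']
            ring
        _ = 0 := by
            have hz := Int.alternating_sum_range_choose_of_ne hd0.ne'
            have hz2 : (∑ i ∈ Finset.range (d + 1), ((-1 : K) ^ i * (d.choose i : K))) = 0 := by
              have hc2 := congrArg (fun z : ℤ => (z : K)) hz
              push_cast at hc2
              simpa using hc2
            rw [hz2, mul_zero]
  have hdvd : (X : Polynomial K) ^ n ∣ (P * Q - 1) := by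
    rw [Polynomial.X_pow_dvd_iff]
    intro d hd
    rw [Polynomial.coeff_sub, key d hd, Polynomial.coeff_one]
    split_ifs with h
    · subst h; simp
    · simp
  obtain ⟨R, hR⟩ := hdvd
  have hPQ : P * Q = X ^ n * R + 1 := by
    rw [← hR]; ring
  calc expNil n α * expNil n (-α) = Polynomial.aeval α (P * Q) := by rw [map_mul, hPa, hQa]
    _ = Polynomial.aeval α ((X : Polynomial K) ^ n * R + 1) := by rw [hPQ]
    _ = 1 := by
        rw [map_add, map_mul, map_pow, Polynomial.aeval_X, hα, zero_mul, zero_add, map_one]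

theorem flt_pow_eq_zero [FiniteDimensional K V] (hmono : Monotone W) {a b : ℤ}
    (ha : ∀ k ≤ a, W k = ⊥) (hb : ∀ k, b ≤ k → W k = ⊤)
    (h : Flt W 1 α) : α ^ (Module.finrank K V + 1) = 0 := by
  have hnil : IsNilpotent α := by
    refine ⟨(b - a).toNat + 1, ?_⟩
    have hp := h.pow ((b - a).toNat + 1)
    exact hp.eq_zero ha hb (by push_cast; omega)
  have hchar := hnil.charpoly_eq_X_pow_finrank
  have haev := LinearMap.aeval_self_charpoly α
  rw [hchar, map_pow, Polynomial.aeval_X] at haev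
  rw [pow_succ, haev, zero_mul]

end Exp

/-- Let `W` be an increasing (finite, exhaustive) filtration of a finite
dimensional vector space `V` over a field `K` of characteristic zero, and let `𝒴(W)` be the
set of gradings of `W`: semisimple endomorphisms `Y` with integer eigenvalues such that
`W k = E_k(Y) ⊕ W (k-1)` for all `k`.  Then the group `exp(W₋₁ gl(V))` acts simply
transitively on `𝒴(W)` by conjugation: for any two gradings `Y, Y'` there is a unique
`α ∈ W₋₁ gl(V)` with `e^α Y e^{-α} = Y'`. -/
theorem stmt3 (K V : Type*) [Field K] [CharZero K] [AddCommGroup V] [Module K V]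
    [FiniteDimensional K V]
    (W : ℤ → Submodule K V) (hmono : Monotone W)
    (hbot : ∃ a, ∀ k ≤ a, W k = ⊥) (htop : ∃ b, ∀ k, b ≤ k → W k = ⊤)
    (IsGrading : Module.End K V → Prop)
    (hgrad : ∀ Y, IsGrading Y ↔ ∀ k : ℤ,
        Disjoint (Module.End.eigenspace Y ((k : K))) (W (k - 1)) ∧
        Module.End.eigenspace Y ((k : K)) ⊔ W (k - 1) = W k) :
    ∀ Y Y', IsGrading Y → IsGrading Y' →
      ∃! α : Module.End K V,
        (∀ k, (W k).map α ≤ W (k - 1)) ∧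
        expNil (Module.finrank K V + 1) α * Y * expNil (Module.finrank K V + 1) (-α) = Y' := by
  obtain ⟨a, ha⟩ := hbot
  obtain ⟨b, hb⟩ := htop
  intro Y Y' hY hY'
  rcases subsingleton_or_nontrivial V with hV | hV
  · have hsub : ∀ x y : Module.End K V, x = y := fun x y =>
      LinearMap.ext fun v => Subsingleton.elim _ _
    refine ⟨0, ⟨fun k => ?_, hsub _ _⟩, fun β _ => hsub _ _⟩
    refine Submodule.map_le_iff_le_comap.mpr fun v hv => ?_
    simp only [Submodule.mem_comap, LinearMap.zero_apply]
    exact Submodule.zero_mem _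
  · rw [hgrad] at hY hY'
    set n := Module.finrank K V + 1 with hn
    have hn2 : 2 ≤ n := by
      have := Module.finrank_pos (R := K) (M := V)
      omega
    have hsupY : ∀ k : ℤ, Module.End.eigenspace Y ((k : K)) ⊔ W (k - 1) = W k :=
      fun k => (hY k).2
    have hsupY' : ∀ k : ℤ, Module.End.eigenspace Y' ((k : K)) ⊔ W (k - 1) = W k :=
      fun k => (hY' k).2
    have hdiffY : Flt W 1 (Y - Y') := grading_diff ha hmono hsupY hsupY'
    have hdiffY' : Flt W 1 (Y' - Y) := by
      have h := hdiffY.neg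
      rwa [neg_sub] at h
    set M : ℕ := (b - a).toNat + 1 with hM
    have hM1 : 1 ≤ M := Nat.le_add_left 1 _
    have hMvan : ∀ γ : Module.End K V, Flt W (M : ℤ) γ → γ = 0 := fun γ hγ =>
      hγ.eq_zero ha hb (by push_cast; omega)
    -- Step A: a unipotent conjugator
    have stepA : ∀ m : ℕ, 1 ≤ m →
        ∃ ν, Flt W 1 ν ∧ Flt W (m : ℤ) ((1 + ν) * Y - Y' * (1 + ν)) := by
      intro m hm
      induction m, hm using Nat.le_induction with
      | base =>
        refine ⟨0, flt_zero, ?_⟩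
        have h1 : (1 + (0 : Module.End K V)) * Y - Y' * (1 + 0) = Y - Y' := by noncomm_ring
        rw [h1]
        exact hdiffY.mono hmono (by norm_num)
      | succ m hm ih =>
        obtain ⟨ν, hν, hδ⟩ := ih
        have hmK : (((m : ℤ) : K)) ≠ 0 := Int.cast_ne_zero.mpr (by omega)
        set δ := (1 + ν) * Y - Y' * (1 + ν) with hδdef
        set τ := -((((m : ℤ) : K))⁻¹) • δ with hτdef
        have hτ : Flt W (m : ℤ) τ := hδ.smul _
        have hmτ : (((m : ℤ) : K)) • τ = -δ := by
          rw [hτdef, smul_smul]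
          rw [show (((m : ℤ) : K)) * (-((((m : ℤ) : K))⁻¹)) = -1 by
            rw [mul_neg, mul_inv_cancel₀ hmK]]
          simp
        refine ⟨ν + τ, hν.add (hτ.mono hmono (by omega)), ?_⟩
        have had := grading_ad ha hmono hsupY hτ
        have hmul : Flt W (1 + (m : ℤ)) ((Y - Y') * τ) := hdiffY.mul hτ
        have hident : (1 + (ν + τ)) * Y - Y' * (1 + (ν + τ))
            = (τ * Y - Y * τ - (((m : ℤ) : K)) • τ) + (Y - Y') * τ := by
          rw [hmτ, hδdef]
          noncomm_ring
        rw [hident]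
        exact (had.add (hmul.mono hmono (by omega))).mono hmono (by push_cast; omega)
    obtain ⟨ν, hν, hν2⟩ := stepA M hM1
    have hcomm : (1 + ν) * Y = Y' * (1 + ν) := sub_eq_zero.mp (hMvan _ hν2)
    -- Step B: take a logarithm
    have stepB : ∀ m : ℕ, 1 ≤ m →
        ∃ α, Flt W 1 α ∧ Flt W (m : ℤ) (expNil n α - (1 + ν)) := by
      intro m hm
      induction m, hm using Nat.le_induction with
      | base =>
        refine ⟨0, flt_zero, ?_⟩
        rw [expNil_zero (le_trans one_le_two hn2)]
        have h1 : (1 : Module.End K V) - (1 + ν) = -ν := by abel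
        rw [h1]
        exact hν.neg.mono hmono (by norm_num)
      | succ m hm ih =>
        obtain ⟨α, hα, hδ⟩ := ih
        set δ := expNil n α - (1 + ν) with hδdef
        have hα' : Flt W 1 (α - δ) := hα.sub (hδ.mono hmono (by omega))
        refine ⟨α - δ, hα', ?_⟩
        have hs : Flt W (m : ℤ) ((α - δ) - α) := by
          have h := hδ.neg
          have h2 : -δ = (α - δ) - α := by abel
          rwa [h2] at h
        have hkey := expNil_key hmono hn2 hα' hα hs
        have hident : expNil n (α - δ) - (1 + ν)
            = (expNil n (α - δ) - expNil n α - ((α - δ) - α)) := by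
          rw [hδdef]
          abel
        rw [hident]
        exact hkey.mono hmono (by push_cast; omega)
    obtain ⟨α, hα1, hα2⟩ := stepB M hM1
    have hEα : expNil n α = 1 + ν := sub_eq_zero.mp (hMvan _ hα2)
    have hαpow : α ^ n = 0 := flt_pow_eq_zero hmono ha hb hα1
    have hinv1 : expNil n α * expNil n (-α) = 1 := expNil_mul_neg hαpow
    have heq : expNil n α * Y * expNil n (-α) = Y' := by
      calc expNil n α * Y * expNil n (-α) = ((1 + ν) * Y) * expNil n (-α) := by rw [hEα]
        _ = Y' * ((1 + ν) * expNil n (-α)) := by rw [hcomm, mul_assoc]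
        _ = Y' * (expNil n α * expNil n (-α)) := by rw [hEα]
        _ = Y' := by rw [hinv1, mul_one]
    have hmapcond : ∀ β : Module.End K V, Flt W 1 β → ∀ k, (W k).map β ≤ W (k - 1) :=
      fun β hβ k => Submodule.map_le_iff_le_comap.mpr fun v hv => hβ k v hv
    refine ⟨α, ⟨hmapcond α hα1, heq⟩, ?_⟩
    -- uniqueness
    rintro β ⟨hβmap, hβeq⟩
    have hβ1 : Flt W 1 β := fun k v hv => hβmap k ⟨v, hv, rfl⟩
    have hβpow : β ^ n = 0 := flt_pow_eq_zero hmono ha hb hβ1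
    have hβinv1 : expNil n β * expNil n (-β) = 1 := expNil_mul_neg hβpow
    have hnegpow : ∀ γ : Module.End K V, γ ^ n = 0 → (-γ) ^ n = 0 := by
      intro γ hγ
      rw [neg_pow, hγ, mul_zero]
    have hβinv2 : expNil n (-β) * expNil n β = 1 := by
      have h := expNil_mul_neg (hnegpow β hβpow)
      rwa [neg_neg] at h
    have hαinv2 : expNil n (-α) * expNil n α = 1 := by
      have h := expNil_mul_neg (hnegpow α hαpow)
      rwa [neg_neg] at h
    have hYcommOf : ∀ γ : Module.End K V, expNil n γ * Y * expNil n (-γ) = Y' →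
        expNil n (-γ) * expNil n γ = 1 → expNil n γ * Y = Y' * expNil n γ := by
      intro γ hγeq hγinv
      calc expNil n γ * Y = expNil n γ * Y * (expNil n (-γ) * expNil n γ) := by
            rw [hγinv, mul_one]
        _ = (expNil n γ * Y * expNil n (-γ)) * expNil n γ := by noncomm_ring
        _ = Y' * expNil n γ := by rw [hγeq]
    have hYβ := hYcommOf β hβeq hβinv2
    have hYα := hYcommOf α heq hαinv2
    set γ := expNil n β - expNil n α with hγdef
    have hγcomm : γ * Y = Y' * γ := by
      rw [hγdef, sub_mul, mul_sub, hYβ, hYα]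
    have hγ1 : Flt W 1 γ := by
      have h1 := expNil_sub_one hmono (le_trans one_le_two hn2) hβ1
      have h2 := expNil_sub_one hmono (le_trans one_le_two hn2) hα1
      have h3 : γ = (expNil n β - 1) - (expNil n α - 1) := by rw [hγdef]; abel
      rw [h3]
      exact h1.sub h2
    have hγall : ∀ m : ℕ, 1 ≤ m → Flt W (m : ℤ) γ := by
      intro m hm
      induction m, hm using Nat.le_induction with
      | base => exact hγ1.mono hmono (by norm_num)
      | succ m hm ih =>
        have hmK : (((m : ℤ) : K)) ≠ 0 := Int.cast_ne_zero.mpr (by omega)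
        have had := grading_ad ha hmono hsupY ih
        have hmul : Flt W (1 + (m : ℤ)) ((Y' - Y) * γ) := hdiffY'.mul ih
        have hz : γ * Y - Y' * γ = 0 := sub_eq_zero.mpr hγcomm
        have hidc : (((m : ℤ) : K)) • γ
            = -(γ * Y - Y * γ - (((m : ℤ) : K)) • γ) + (γ * Y - Y' * γ) + (Y' - Y) * γ := by
          noncomm_ring
        rw [hz, add_zero] at hidc
        have hsm : Flt W ((m : ℤ) + 1) ((((m : ℤ) : K)) • γ) := by
          rw [hidc]
          exact had.neg.add (hmul.mono hmono (by omega))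
        have hfin : γ = ((((m : ℤ) : K))⁻¹) • ((((m : ℤ) : K)) • γ) := by
          rw [smul_smul, inv_mul_cancel₀ hmK, one_smul]
        rw [hfin]
        exact (hsm.smul _).mono hmono (by push_cast; omega)
    have hEβα : expNil n β = expNil n α := sub_eq_zero.mp (hMvan γ (hγall M hM1))
    have hsuball : ∀ m : ℕ, 1 ≤ m → Flt W (m : ℤ) (β - α) := by
      intro m hm
      induction m, hm using Nat.le_induction with
      | base => exact (hβ1.sub hα1).mono hmono (by norm_num)
      | succ m hm ih =>
        have hkey := expNil_key hmono hn2 hβ1 hα1 ih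
        have h0 : expNil n β - expNil n α = 0 := sub_eq_zero.mpr hEβα
        have h2 := hkey.neg
        rw [hEβα, sub_self, zero_sub, neg_neg] at h2
        exact h2.mono hmono (by push_cast; omega)
    exact sub_eq_zero.mp (hMvan _ (hsuball M hM1))
end

section
/- In the Koszul-type setting, define the pairing q_t on the partial Koszul complexes by q_t(N_I h ⊗ e_I, N_J* λ ⊗ e_J) = t_I·λ(N_J h) if I = J (as sets of indices, with t_I = Π_{i∈I} t_i) and 0 otherwise. Then for α in the partial Koszul complex B(H) and β in B(H*): q_t(dα, β) = q_t(α, δ_t β) and q_t(δ_t α, β) = q_t(α, dβ). -/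
open Finset

private lemma reindex7 {r : ℕ} {F : Type*} [Field F] (f : Finset (Fin r) → Fin r → F) :
    ∑ J : Finset (Fin r), ∑ i ∈ J, f J i
      = ∑ I : Finset (Fin r), ∑ k ∈ Iᶜ, f (insert k I) k := by
  rw [Finset.sum_sigma', Finset.sum_sigma']
  apply Finset.sum_bij' (fun p _ => (⟨p.1.erase p.2, p.2⟩ : Σ _ : Finset (Fin r), Fin r))
    (fun p _ => (⟨insert p.2 p.1, p.2⟩ : Σ _ : Finset (Fin r), Fin r))
  · rintro ⟨J, i⟩ h
    simp only [Finset.mem_sigma, Finset.mem_univ, true_and, Finset.mem_compl] at *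
    exact Finset.notMem_erase _ _
  · rintro ⟨I, k⟩ h
    simp only [Finset.mem_sigma, Finset.mem_univ, true_and, Finset.mem_compl] at *
    exact Finset.mem_insert_self _ _
  · rintro ⟨J, i⟩ h
    simp only [Finset.mem_sigma, Finset.mem_univ, true_and] at h
    simp [Finset.insert_erase h]
  · rintro ⟨I, k⟩ h
    simp only [Finset.mem_sigma, Finset.mem_univ, true_and, Finset.mem_compl] at h
    simp [Finset.erase_insert h]
  · rintro ⟨J, i⟩ h
    simp only [Finset.mem_sigma, Finset.mem_univ, true_and] at h
    simp [Finset.insert_erase h]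

/-- Adjointness of the Koszul differential `d` and the contraction `δ_t` with
respect to the pairing `q_t` on the partial Koszul complexes `B(H)` and `B(H*)`.

Elements of `B^p(H)` are sums of `N_I h ⊗ e_I`; we represent them by witness coefficient
functions `a : Finset (Fin r) → H`, the function `a` representing `∑_I N_I (a I) ⊗ e_I`,
and similarly elements of `B(H*)` by `b : Finset (Fin r) → H*`, representing
`∑_I N_I* (b I) ⊗ e_I`.  The pairing is
`q_t(∑ N_I (a I) ⊗ e_I, ∑ N_I* (b I) ⊗ e_I) = ∑_I t_I · (N_I* (b I)) (a I)
  = ∑_I t_I · (b I) (N_I (a I))`.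
At witness level the differential is `(d a)(J) = ∑_{i∈J} ε(i,J) • a (J \ i)` (the operator
`N_J` being applied by the representation) and the contraction is
`(δ_t a)(I) = ∑_{k∉I} ε(k,I) • t_k • N_k (a (I ∪ k))` (resp. with `N_k*` on the dual side).
Then `q_t(dα, β) = q_t(α, δ_t β)` and `q_t(δ_t α, β) = q_t(α, dβ)`. -/
theorem stmt7 (F H : Type*) [Field F] [AddCommGroup H] [Module F H] [FiniteDimensional F H]
    (r : ℕ) (N : Fin r → Module.End F H)
    (hcomm : ∀ i j, Commute (N i) (N j)) (hnil : ∀ i, IsNilpotent (N i))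
    (t : Fin r → F)
    (ε : Fin r → Finset (Fin r) → ℤ)
    (hε : ∀ i J, ε i J = (-1 : ℤ) ^ (J.filter (fun j => j < i)).card)
    (NI : Finset (Fin r) → Module.End F H)
    (hNI : ∀ I : Finset (Fin r), NI I = I.noncommProd N (fun i _ j _ _ => hcomm i j))
    (q : (Finset (Fin r) → H) → (Finset (Fin r) → Module.Dual F H) → F)
    (hq : ∀ a b, q a b = ∑ I : Finset (Fin r), (∏ i ∈ I, t i) * (b I) ((NI I) (a I)))
    (dH δH : (Finset (Fin r) → H) → (Finset (Fin r) → H))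
    (hdH : ∀ a J, dH a J = ∑ i ∈ J, ε i J • a (J.erase i))
    (hδH : ∀ a I, δH a I = ∑ k ∈ Iᶜ, ε k I • t k • (N k) (a (insert k I)))
    (dD δD : (Finset (Fin r) → Module.Dual F H) → (Finset (Fin r) → Module.Dual F H))
    (hdD : ∀ b J, dD b J = ∑ i ∈ J, ε i J • b (J.erase i))
    (hδD : ∀ b I, δD b I = ∑ k ∈ Iᶜ, ε k I • t k • (N k).dualMap (b (insert k I))) :
    ∀ (a : Finset (Fin r) → H) (b : Finset (Fin r) → Module.Dual F H),
      q (dH a) b = q a (δD b) ∧ q (δH a) b = q a (dD b) := by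
  intro a b
  -- basic facts
  have hεins : ∀ (i : Fin r) (I : Finset (Fin r)), i ∉ I → ε i (insert i I) = ε i I := by
    intro i I hi
    rw [hε, hε]
    congr 1
    rw [Finset.filter_insert, if_neg (lt_irrefl i)]
  have hNIins : ∀ (k : Fin r) (I : Finset (Fin r)), k ∉ I →
      NI (insert k I) = N k * NI I := by
    intro k I hk
    rw [hNI, hNI]
    exact Finset.noncommProd_insert_of_notMem _ _ _ _ hk
  have hNIcomm : ∀ (k : Fin r) (I : Finset (Fin r)), Commute (N k) (NI I) := by
    intro k I
    rw [hNI]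
    exact Finset.noncommProd_commute _ _ _ _ (fun j _ => hcomm k j)
  constructor
  · -- q (dH a) b = q a (δD b)
    rw [hq, hq]
    have L : ∀ J : Finset (Fin r),
        (∏ i ∈ J, t i) * (b J) ((NI J) (dH a J))
          = ∑ i ∈ J, ε i J • ((∏ i ∈ J, t i) * (b J) ((NI J) (a (J.erase i)))) := by
      intro J
      rw [hdH, map_sum, map_sum, Finset.mul_sum]
      refine Finset.sum_congr rfl fun i _ => ?_
      rw [map_zsmul, map_zsmul, mul_smul_comm]
    have R : ∀ I : Finset (Fin r),
        (∏ i ∈ I, t i) * (δD b I) ((NI I) (a I))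
          = ∑ k ∈ Iᶜ, ε k I • ((∏ i ∈ I, t i) *
              (t k * (b (insert k I)) ((N k) ((NI I) (a I))))) := by
      intro I
      rw [hδD, LinearMap.sum_apply, Finset.mul_sum]
      refine Finset.sum_congr rfl fun k _ => ?_
      rw [LinearMap.smul_apply, LinearMap.smul_apply, LinearMap.dualMap_apply,
        mul_smul_comm, smul_eq_mul]
    simp only [L, R]
    rw [reindex7 (fun J i => ε i J • ((∏ i ∈ J, t i) * (b J) ((NI J) (a (J.erase i)))))]
    refine Finset.sum_congr rfl fun I _ => Finset.sum_congr rfl fun k hk => ?_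
    rw [Finset.mem_compl] at hk
    rw [hεins k I hk, Finset.erase_insert hk, hNIins k I hk,
      Finset.prod_insert hk]
    congr 1
    simp only [Module.End.mul_apply]
    ring
  · -- q (δH a) b = q a (dD b)
    rw [hq, hq]
    have L : ∀ I : Finset (Fin r),
        (∏ i ∈ I, t i) * (b I) ((NI I) (δH a I))
          = ∑ k ∈ Iᶜ, ε k I • ((∏ i ∈ I, t i) *
              (t k * (b I) ((NI I) ((N k) (a (insert k I)))))) := by
      intro I
      rw [hδH, map_sum, map_sum, Finset.mul_sum]
      refine Finset.sum_congr rfl fun k _ => ?_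
      rw [map_zsmul, map_zsmul, map_smul, map_smul, mul_smul_comm, smul_eq_mul]
    have R : ∀ J : Finset (Fin r),
        (∏ i ∈ J, t i) * (dD b J) ((NI J) (a J))
          = ∑ i ∈ J, ε i J • ((∏ i ∈ J, t i) * (b (J.erase i)) ((NI J) (a J))) := by
      intro J
      rw [hdD, LinearMap.sum_apply, Finset.mul_sum]
      refine Finset.sum_congr rfl fun i _ => ?_
      rw [LinearMap.smul_apply, mul_smul_comm]
    simp only [L, R]
    rw [reindex7 (fun J i => ε i J • ((∏ i ∈ J, t i) * (b (J.erase i)) ((NI J) (a J))))]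
    refine Finset.sum_congr rfl fun I _ => Finset.sum_congr rfl fun k hk => ?_
    rw [Finset.mem_compl] at hk
    rw [hεins k I hk, Finset.erase_insert hk, hNIins k I hk,
      Finset.prod_insert hk]
    congr 1
    have hc := hNIcomm k I
    simp only [Module.End.mul_apply]
    rw [show (N k) ((NI I) (a (insert k I))) = (NI I) ((N k) (a (insert k I))) by
      rw [← Module.End.mul_apply, ← Module.End.mul_apply, hc.eq]]
    ring
end

section
/- Let B, C, A be abelian groups and U an extension of B ⊗ C by A. Let E be the pullback of U along the natural map B × C → B ⊗ C, (b,c) ↦ b ⊗ c. Then E, with the A-action by translation and the partial addition laws +₁ (adding fibers over fixed b ∈ B using addition in U) and +₂ (adding fibers over fixed c ∈ C), is a biextension of B × C by A. -/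
open TensorProduct

/-- A (Mumford–Grothendieck) biextension of `B × C` by `A`: an `A`-torsor `π : E → B × C`
with partial composition laws `+₁` (on fibers over a fixed `b ∈ B`) and `+₂` (on fibers over
a fixed `c ∈ C`) making each fiber `E_b` (resp. `E_c`) an abelian group surjecting onto `C`
(resp. `B`) with kernel `A`, satisfying the usual compatibility. -/
structure IsBiextension (A B C E : Type*) [AddCommGroup A] [AddCommGroup B] [AddCommGroup C]
    (π : E → B × C) (act : A → E → E) (add1 add2 : E → E → E) : Prop where
  -- `E` is an `A`-torsor over `B × C`
  act_pi : ∀ a e, π (act a e) = π e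
  act_act : ∀ a a' e, act a (act a' e) = act (a + a') e
  pi_surj : Function.Surjective π
  torsor : ∀ e e', π e = π e' → ∃! a, act a e = e'
  -- `+₁` makes each `E_b` an abelian group, `E_b → C` a surjective homomorphism,
  -- and `A → ker(E_b → C)`, `a ↦ a • 0_b`, a group isomorphism
  add1_pi : ∀ e e', (π e).1 = (π e').1 → π (add1 e e') = ((π e).1, (π e).2 + (π e').2)
  add1_comm : ∀ e e', (π e).1 = (π e').1 → add1 e e' = add1 e' e
  add1_assoc : ∀ e e' e'', (π e).1 = (π e').1 → (π e').1 = (π e'').1 →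
      add1 (add1 e e') e'' = add1 e (add1 e' e'')
  add1_act : ∀ a e e', (π e).1 = (π e').1 → add1 (act a e) e' = act a (add1 e e')
  add1_zero : ∀ b : B, ∃ z, π z = (b, 0) ∧ ∀ e, (π e).1 = b → add1 z e = e
  add1_neg : ∀ e, ∃ e', π e' = ((π e).1, -(π e).2) ∧
      ∀ g, (π g).1 = (π e).1 → add1 (add1 e e') g = g
  -- symmetrically for `+₂`
  add2_pi : ∀ e e', (π e).2 = (π e').2 → π (add2 e e') = ((π e).1 + (π e').1, (π e).2)
  add2_comm : ∀ e e', (π e).2 = (π e').2 → add2 e e' = add2 e' e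
  add2_assoc : ∀ e e' e'', (π e).2 = (π e').2 → (π e').2 = (π e'').2 →
      add2 (add2 e e') e'' = add2 e (add2 e' e'')
  add2_act : ∀ a e e', (π e).2 = (π e').2 → add2 (act a e) e' = act a (add2 e e')
  add2_zero : ∀ c : C, ∃ z, π z = (0, c) ∧ ∀ e, (π e).2 = c → add2 z e = e
  add2_neg : ∀ e, ∃ e', π e' = (-(π e).1, (π e).2) ∧
      ∀ g, (π g).2 = (π e).2 → add2 (add2 e e') g = g
  -- the compatibility between `+₁` and `+₂`
  compat : ∀ e11 e12 e21 e22,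
      (π e11).1 = (π e12).1 → (π e21).1 = (π e22).1 →
      (π e11).2 = (π e21).2 → (π e12).2 = (π e22).2 →
      add2 (add1 e11 e12) (add1 e21 e22) = add1 (add2 e11 e21) (add2 e12 e22)

/-- Let `B, C, A` be abelian groups and `U` an extension of `B ⊗ C` by `A`
(via `i : A → U` injective, `p : U → B ⊗ C` surjective, with `range i = ker p`).  Let `E` be
the pullback of `U` to `B × C` along `(b,c) ↦ b ⊗ c`.  Then `E`, with the `A`-action by
translation and the partial addition laws `+₁` and `+₂` defined using the addition of `U`,
is a biextension of `B × C` by `A`. -/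
theorem stmt12 (A B C U : Type*) [AddCommGroup A] [AddCommGroup B] [AddCommGroup C]
    [AddCommGroup U]
    (i : A →+ U) (p : U →+ (B ⊗[ℤ] C))
    (hi : Function.Injective i) (hp : Function.Surjective p)
    (hexact : ∀ u : U, p u = 0 ↔ u ∈ Set.range i)
    -- `E` is (in bijection with) the pullback `{x : U × B × C // p x.1 = x.2.1 ⊗ₜ x.2.2}`:
    (E : Type*)
    (emk : ∀ x : U × B × C, p x.1 = x.2.1 ⊗ₜ[ℤ] x.2.2 → E)
    (eval : E → U × B × C)
    (heval : ∀ x hx, eval (emk x hx) = x)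
    (hext : ∀ e e' : E, eval e = eval e' → e = e')
    (hval : ∀ e : E, p (eval e).1 = (eval e).2.1 ⊗ₜ[ℤ] (eval e).2.2)
    (π : E → B × C) (hπ : ∀ e, π e = (eval e).2)
    (act : A → E → E)
    (hact : ∀ a e, eval (act a e) = ((eval e).1 + i a, (eval e).2))
    (add1 : E → E → E)
    (hadd1 : ∀ e e', (eval e).2.1 = (eval e').2.1 →
        eval (add1 e e') =
          ((eval e).1 + (eval e').1, (eval e).2.1, (eval e).2.2 + (eval e').2.2))
    (add2 : E → E → E)
    (hadd2 : ∀ e e', (eval e).2.2 = (eval e').2.2 →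
        eval (add2 e e') =
          ((eval e).1 + (eval e').1, (eval e).2.1 + (eval e').2.1, (eval e).2.2)) :
    IsBiextension A B C E π act add1 add2 := by

  constructor
  -- act_pi
  · intro a e; rw [hπ, hπ, hact]
  -- act_act
  · intro a a' e
    apply hext
    rw [hact, hact, hact, map_add, Prod.mk.injEq]
    exact ⟨by dsimp only; abel, rfl⟩
  -- pi_surj
  · rintro ⟨b, c⟩
    obtain ⟨u, hu⟩ := hp (b ⊗ₜ[ℤ] c)
    exact ⟨emk (u, b, c) hu, by rw [hπ, heval]⟩
  -- torsor
  · intro e e' h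
    rw [hπ, hπ] at h
    have h0 : p ((eval e').1 - (eval e).1) = 0 := by
      rw [map_sub, hval, hval, h, sub_self]
    obtain ⟨a, ha⟩ := (hexact _).1 h0
    refine ⟨a, hext _ _ ?_, ?_⟩
    · rw [hact, ha, Prod.mk.injEq]
      exact ⟨by abel, h⟩
    · intro a' ha'
      apply hi
      have := congrArg (fun x => (eval x).1) ha'
      simp only [hact] at this
      have h2 : i a' = (eval e').1 - (eval e).1 := by rw [← this]; abel
      rw [h2, ha]
  -- add1_pi
  · intro e e' h
    rw [hπ, hπ] at h ⊢
    rw [hπ, hadd1 e e' h]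
  -- add1_comm
  · intro e e' h
    rw [hπ, hπ] at h
    apply hext
    rw [hadd1 e e' h, hadd1 e' e h.symm, h, Prod.mk.injEq, Prod.mk.injEq]
    exact ⟨by abel, rfl, by abel⟩
  -- add1_assoc
  · intro e e' e'' h h'
    rw [hπ, hπ] at h h'
    apply hext
    have h1 : (eval (add1 e e')).2.1 = (eval e'').2.1 := by
      rw [hadd1 e e' h]; exact h.trans h'
    have h2 : (eval e).2.1 = (eval (add1 e' e'')).2.1 := by
      rw [hadd1 e' e'' h']; exact h
    rw [hadd1 _ _ h1, hadd1 _ _ h2, hadd1 e e' h, hadd1 e' e'' h', Prod.mk.injEq,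
      Prod.mk.injEq]
    exact ⟨by dsimp only; abel, rfl, by dsimp only; abel⟩
  -- add1_act
  · intro a e e' h
    rw [hπ, hπ] at h
    apply hext
    have h1 : (eval (act a e)).2.1 = (eval e').2.1 := by rw [hact]; exact h
    rw [hadd1 _ _ h1, hact, hact, hadd1 e e' h, Prod.mk.injEq]
    exact ⟨by dsimp only; abel, rfl⟩
  -- add1_zero
  · intro b
    have hz : p 0 = b ⊗ₜ[ℤ] (0 : C) := by rw [map_zero, tmul_zero]
    refine ⟨emk (0, b, 0) hz, by rw [hπ, heval], ?_⟩
    intro e he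
    rw [hπ] at he
    apply hext
    have h1 : (eval (emk (0, b, 0) hz)).2.1 = (eval e).2.1 := by rw [heval, he]
    rw [hadd1 _ _ h1, heval]
    simp [← he]
  -- add1_neg
  · intro e
    have hz : p (-(eval e).1) = (eval e).2.1 ⊗ₜ[ℤ] (-(eval e).2.2) := by
      rw [map_neg, hval, tmul_neg]
    refine ⟨emk (-(eval e).1, (eval e).2.1, -(eval e).2.2) hz,
      by rw [hπ, hπ, heval], ?_⟩
    intro g hg
    rw [hπ, hπ] at hg
    apply hext
    set z := emk (-(eval e).1, (eval e).2.1, -(eval e).2.2) hz with hzdef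
    have h1 : (eval e).2.1 = (eval z).2.1 := by rw [heval]
    have h2 : (eval (add1 e z)).2.1 = (eval g).2.1 := by
      rw [hadd1 _ _ h1]; exact hg.symm
    rw [hadd1 _ _ h2, hadd1 _ _ h1, heval, Prod.mk.injEq, Prod.mk.injEq]
    refine ⟨?_, hg.symm, ?_⟩ <;> simp
  -- add2_pi
  · intro e e' h
    rw [hπ, hπ] at h ⊢
    rw [hπ, hadd2 e e' h]
  -- add2_comm
  · intro e e' h
    rw [hπ, hπ] at h
    apply hext
    rw [hadd2 e e' h, hadd2 e' e h.symm, h, Prod.mk.injEq, Prod.mk.injEq]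
    exact ⟨by abel, by abel, rfl⟩
  -- add2_assoc
  · intro e e' e'' h h'
    rw [hπ, hπ] at h h'
    apply hext
    have h1 : (eval (add2 e e')).2.2 = (eval e'').2.2 := by
      rw [hadd2 e e' h]; exact h.trans h'
    have h2 : (eval e).2.2 = (eval (add2 e' e'')).2.2 := by
      rw [hadd2 e' e'' h']; exact h
    rw [hadd2 _ _ h1, hadd2 _ _ h2, hadd2 e e' h, hadd2 e' e'' h', Prod.mk.injEq,
      Prod.mk.injEq]
    exact ⟨by dsimp only; abel, by dsimp only; abel, rfl⟩
  -- add2_act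
  · intro a e e' h
    rw [hπ, hπ] at h
    apply hext
    have h1 : (eval (act a e)).2.2 = (eval e').2.2 := by rw [hact]; exact h
    rw [hadd2 _ _ h1, hact, hact, hadd2 e e' h, Prod.mk.injEq]
    exact ⟨by dsimp only; abel, rfl⟩
  -- add2_zero
  · intro c
    have hz : p 0 = (0 : B) ⊗ₜ[ℤ] c := by rw [map_zero, zero_tmul]
    refine ⟨emk (0, 0, c) hz, by rw [hπ, heval], ?_⟩
    intro e he
    rw [hπ] at he
    apply hext
    have h1 : (eval (emk (0, 0, c) hz)).2.2 = (eval e).2.2 := by rw [heval, he]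
    rw [hadd2 _ _ h1, heval]
    simp [← he]
  -- add2_neg
  · intro e
    have hz : p (-(eval e).1) = (-(eval e).2.1) ⊗ₜ[ℤ] (eval e).2.2 := by
      rw [map_neg, hval, neg_tmul]
    refine ⟨emk (-(eval e).1, -(eval e).2.1, (eval e).2.2) hz,
      by rw [hπ, hπ, heval], ?_⟩
    intro g hg
    rw [hπ, hπ] at hg
    apply hext
    set z := emk (-(eval e).1, -(eval e).2.1, (eval e).2.2) hz with hzdef
    have h1 : (eval e).2.2 = (eval z).2.2 := by rw [heval]
    have h2 : (eval (add2 e z)).2.2 = (eval g).2.2 := by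
      rw [hadd2 _ _ h1]; exact hg.symm
    rw [hadd2 _ _ h2, hadd2 _ _ h1, heval, Prod.mk.injEq, Prod.mk.injEq]
    refine ⟨?_, ?_, hg.symm⟩ <;> simp
  -- compat
  · intro e11 e12 e21 e22 hb1 hb2 hc1 hc2
    rw [hπ, hπ] at hb1 hb2 hc1 hc2
    apply hext
    have hA : (eval (add1 e11 e12)).2.2 = (eval (add1 e21 e22)).2.2 := by
      rw [hadd1 _ _ hb1, hadd1 _ _ hb2, hc1, hc2]
    have hB : (eval (add2 e11 e21)).2.1 = (eval (add2 e12 e22)).2.1 := by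
      rw [hadd2 _ _ hc1, hadd2 _ _ hc2, hb1, hb2]
    rw [hadd2 _ _ hA, hadd1 _ _ hB, hadd1 _ _ hb1, hadd1 _ _ hb2,
      hadd2 _ _ hc1, hadd2 _ _ hc2, Prod.mk.injEq, Prod.mk.injEq]
    exact ⟨by dsimp only; abel, rfl, by abel⟩
end

section
/- With H, Q, θ, u, c as above, define I: Λ³H → Λ³H by I(ω) = (g−1)ω − u(c(ω)). Then ker(I) = im(u), and moreover Λ³H decomposes as the direct sum u(H) ⊕ L, where L is the subgroup generated by (1) all vᵢ∧vⱼ∧v_k with v_l ∈ {e_l, f_l} and i<j<k, and (2) all vᵢ∧eⱼ∧fⱼ with vᵢ ∈ {eᵢ,fᵢ} and i−j not congruent to 0 or 1 modulo g. In particular V := Λ³H / u(H) is torsion free. -/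
section Aux

variable {H : Type*} [AddCommGroup H] {g : ℕ}

def tri3 (P R : Fin g → H →ₗ[ℤ] ℤ) (Z : Fin g → H →ₗ[ℤ] H) : H [⋀^Fin 3]→ₗ[ℤ] H where
  toFun v := ∑ m : Fin g,
    ((P m (v 0) * R m (v 1) - P m (v 1) * R m (v 0)) • Z m (v 2)
      - (P m (v 0) * R m (v 2) - P m (v 2) * R m (v 0)) • Z m (v 1)
      + (P m (v 1) * R m (v 2) - P m (v 2) * R m (v 1)) • Z m (v 0))
  map_update_add' := by
    intro dec v i x y
    obtain rfl : dec = instDecidableEqFin 3 := Subsingleton.elim _ _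
    have n01 : (0:Fin 3) ≠ 1 := Fin.ne_of_val_ne (by decide)
    have n02 : (0:Fin 3) ≠ 2 := Fin.ne_of_val_ne (by decide)
    have n10 : (1:Fin 3) ≠ 0 := Fin.ne_of_val_ne (by decide)
    have n12 : (1:Fin 3) ≠ 2 := Fin.ne_of_val_ne (by decide)
    have n20 : (2:Fin 3) ≠ 0 := Fin.ne_of_val_ne (by decide)
    have n21 : (2:Fin 3) ≠ 1 := Fin.ne_of_val_ne (by decide)
    fin_cases i <;>
      · simp [Fin.zero_eta, Fin.mk_one, Fin.reduceFinMk, Function.update_self,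
          Function.update_of_ne n01, Function.update_of_ne n02, Function.update_of_ne n10,
          Function.update_of_ne n12, Function.update_of_ne n20, Function.update_of_ne n21,
          map_add]
        rw [← Finset.sum_add_distrib]
        refine Finset.sum_congr rfl fun m _ => ?_
        module
  map_update_smul' := by
    intro dec v i r x
    obtain rfl : dec = instDecidableEqFin 3 := Subsingleton.elim _ _
    have n01 : (0:Fin 3) ≠ 1 := Fin.ne_of_val_ne (by decide)
    have n02 : (0:Fin 3) ≠ 2 := Fin.ne_of_val_ne (by decide)
    have n10 : (1:Fin 3) ≠ 0 := Fin.ne_of_val_ne (by decide)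
    have n12 : (1:Fin 3) ≠ 2 := Fin.ne_of_val_ne (by decide)
    have n20 : (2:Fin 3) ≠ 0 := Fin.ne_of_val_ne (by decide)
    have n21 : (2:Fin 3) ≠ 1 := Fin.ne_of_val_ne (by decide)
    fin_cases i <;>
      · simp [Fin.zero_eta, Fin.mk_one, Fin.reduceFinMk, Function.update_self,
          Function.update_of_ne n01, Function.update_of_ne n02, Function.update_of_ne n10,
          Function.update_of_ne n12, Function.update_of_ne n20, Function.update_of_ne n21,
          map_smul, smul_eq_mul]
        rw [Finset.smul_sum]
        refine Finset.sum_congr rfl fun m _ => ?_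
        module
  map_eq_zero_of_eq' := by
    intro v i j hij hne
    show (∑ m : Fin g,
      ((P m (v 0) * R m (v 1) - P m (v 1) * R m (v 0)) • Z m (v 2)
      - (P m (v 0) * R m (v 2) - P m (v 2) * R m (v 0)) • Z m (v 1)
      + (P m (v 1) * R m (v 2) - P m (v 2) * R m (v 1)) • Z m (v 0))) = 0
    apply Finset.sum_eq_zero
    intro m _
    fin_cases i <;> fin_cases j <;> (try exact absurd rfl hne) <;>
      · simp [Fin.zero_eta, Fin.mk_one, Fin.reduceFinMk] at hij
        rw [hij]
        module

theorem tri3_apply (P R : Fin g → H →ₗ[ℤ] ℤ) (Z : Fin g → H →ₗ[ℤ] H) (v : Fin 3 → H) :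
    tri3 P R Z v = ∑ m : Fin g,
    ((P m (v 0) * R m (v 1) - P m (v 1) * R m (v 0)) • Z m (v 2)
      - (P m (v 0) * R m (v 2) - P m (v 2) * R m (v 0)) • Z m (v 1)
      + (P m (v 1) * R m (v 2) - P m (v 2) * R m (v 1)) • Z m (v 0)) := rfl


variable (b : Module.Basis (Fin g ⊕ Fin g) ℤ H)

lemma coord_b (a a' : Fin g ⊕ Fin g) : b.coord a (b a') = if a' = a then 1 else 0 := by
  simp [Module.Basis.coord_apply, Module.Basis.repr_self, Finsupp.single_apply]

noncomputable def PZ (m : Fin g) : H →ₗ[ℤ] H :=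
  (b.coord (Sum.inl m)).smulRight (b (Sum.inl m)) + (b.coord (Sum.inr m)).smulRight (b (Sum.inr m))

lemma PZ_inl (m i : Fin g) : PZ b m (b (Sum.inl i)) = if i = m then b (Sum.inl i) else 0 := by
  simp only [PZ, LinearMap.add_apply, LinearMap.smulRight_apply, coord_b]
  by_cases h : i = m <;> simp [h]

lemma PZ_inr (m i : Fin g) : PZ b m (b (Sum.inr i)) = if i = m then b (Sum.inr i) else 0 := by
  simp only [PZ, LinearMap.add_apply, LinearMap.smulRight_apply, coord_b]
  by_cases h : i = m <;> simp [h]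

noncomputable def AA [NeZero g] : H [⋀^Fin 3]→ₗ[ℤ] H :=
  tri3 (fun m => b.coord (Sum.inl (m - 1))) (fun m => b.coord (Sum.inr (m - 1))) (PZ b)

lemma fin_one_ne_zero' (hg : 2 ≤ g) [NeZero g] : (1 : Fin g) ≠ 0 := by
  intro h
  have := congrArg Fin.val h
  rw [Fin.val_one' g, Fin.val_zero, Nat.mod_eq_of_lt (by omega)] at this
  omega

lemma fin_succ_ne (hg : 2 ≤ g) [NeZero g] (i : Fin g) : i + 1 ≠ i := by
  intro h
  nth_rewrite 2 [← add_zero i] at h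
  exact fin_one_ne_zero' hg (add_left_cancel h)

lemma fin_sub_one_eq [NeZero g] (i m : Fin g) : m - 1 = i ↔ m = i + 1 := by
  constructor
  · rintro rfl; rw [sub_add_cancel]
  · rintro rfl; rw [add_sub_cancel_right]

lemma v3_0 (x y z : H) : (![x, y, z]) 0 = x := rfl
lemma v3_1 (x y z : H) : (![x, y, z]) 1 = y := rfl
lemma v3_2 (x y z : H) : (![x, y, z]) 2 = z := rfl

lemma AA_efz [NeZero g] (hg : 2 ≤ g) (i : Fin g) (z : H) :
    AA b ![b (Sum.inl i), b (Sum.inr i), z] = PZ b (i + 1) z := by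
  rw [AA, tri3_apply]
  rw [Finset.sum_eq_single (i + 1)]
  · have h1 : (i + 1 : Fin g) - 1 = i := by rw [add_sub_cancel_right]
    simp only [v3_0, v3_1, v3_2, coord_b, h1, PZ_inl, PZ_inr]
    have h2 : ¬ (i = i + 1) := fun h => fin_succ_ne hg i h.symm
    simp [h2]
  · intro m _ hm
    have h1 : ¬ (m - 1 = i) := by rw [fin_sub_one_eq]; exact hm
    have h1' : ¬ (i = m - 1) := fun h => h1 h.symm
    simp only [v3_0, v3_1, v3_2, coord_b]
    simp [h1']
  · intro h; exact absurd (Finset.mem_univ _) h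

lemma AA_xef [NeZero g] (hg : 2 ≤ g) (i j : Fin g) (hij : i ≠ j) (x : H)
    (hx : x = b (Sum.inl i) ∨ x = b (Sum.inr i)) :
    AA b ![x, b (Sum.inl j), b (Sum.inr j)] = if i = j + 1 then x else 0 := by
  have key : AA b ![x, b (Sum.inl j), b (Sum.inr j)] = PZ b (j + 1) x := by
    rw [AA, tri3_apply]
    rw [Finset.sum_eq_single (j + 1)]
    · have h1 : (j + 1 : Fin g) - 1 = j := by rw [add_sub_cancel_right]
      have h2 : ¬ (i = j) := hij
      rcases hx with rfl | rfl <;>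
        simp [v3_0, v3_1, v3_2, coord_b, h1, h2]
    · intro m _ hm
      have h1 : ¬ (j = m - 1) := fun h => hm ((fin_sub_one_eq j m).mp h.symm)
      rcases hx with rfl | rfl <;>
        · simp only [v3_0, v3_1, v3_2, coord_b]
          simp [h1]
    · intro h; exact absurd (Finset.mem_univ _) h
  rw [key]
  rcases hx with rfl | rfl
  · rw [PZ_inl]
  · rw [PZ_inr]

lemma PR_zero [NeZero g] (m : Fin g) {p q : Fin g} (hpq : p ≠ q) {x y : H}
    (hx : x = b (Sum.inl p) ∨ x = b (Sum.inr p)) (hy : y = b (Sum.inl q) ∨ y = b (Sum.inr q)) :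
    b.coord (Sum.inl (m - 1)) x * b.coord (Sum.inr (m - 1)) y = 0 := by
  rcases hx with rfl | rfl <;> rcases hy with rfl | rfl <;>
    · simp only [coord_b, Sum.inl.injEq, Sum.inr.injEq, reduceCtorEq, if_false, ite_false]
      (try split_ifs with h1 h2 h3) <;> first | exact absurd (h1.trans h2.symm) hpq | ring

lemma AA_S1 [NeZero g] {p q r : Fin g} (hpq : p ≠ q) (hpr : p ≠ r) (hqr : q ≠ r)
    {x y z : H} (hx : x = b (Sum.inl p) ∨ x = b (Sum.inr p))
    (hy : y = b (Sum.inl q) ∨ y = b (Sum.inr q))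
    (hz : z = b (Sum.inl r) ∨ z = b (Sum.inr r)) :
    AA b ![x, y, z] = 0 := by
  rw [AA, tri3_apply]
  apply Finset.sum_eq_zero
  intro m _
  simp only [v3_0, v3_1, v3_2]
  rw [PR_zero b m hpq hx hy, PR_zero b m hpq.symm hy hx, PR_zero b m hpr hx hz,
    PR_zero b m hpr.symm hz hx, PR_zero b m hqr hy hz, PR_zero b m hqr.symm hz hy]
  simp


noncomputable def phiB [NeZero g] : ExteriorAlgebra ℤ H →ₗ[ℤ] H :=
  ExteriorAlgebra.liftAlternating (fun n => match n with | 3 => AA b | _ => 0)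

lemma phiB_iMulti [NeZero g] (v : Fin 3 → H) :
    phiB b (ExteriorAlgebra.ιMulti ℤ 3 v) = AA b v := by
  rw [phiB, ExteriorAlgebra.liftAlternating_apply_ιMulti]
  rfl

lemma sum_PZ (z : H) : ∑ m : Fin g, PZ b m z = z := by
  have h := b.sum_repr z
  rw [Fintype.sum_sum_type] at h
  simp only [PZ, LinearMap.add_apply, LinearMap.smulRight_apply, Module.Basis.coord_apply]
  rw [Finset.sum_add_distrib, h]

lemma sum_PZ_succ [NeZero g] (z : H) : ∑ i : Fin g, PZ b (i + 1) z = z := by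
  calc ∑ i : Fin g, PZ b (i + 1) z
      = ∑ m : Fin g, PZ b m z :=
        Fintype.sum_equiv (Equiv.addRight 1) (fun i => PZ b (i + 1) z)
          (fun m => PZ b m z) (fun i => rfl)
    _ = z := sum_PZ b z

-- swap lemmas
lemma sw01 (x y z : H) :
    ExteriorAlgebra.ιMulti ℤ 3 ![y, x, z] = -ExteriorAlgebra.ιMulti ℤ 3 ![x, y, z] := by
  have h := (ExteriorAlgebra.ιMulti ℤ 3 (M := H)).map_swap (v := ![x, y, z])
    (i := (0 : Fin 3)) (j := 1) (Fin.ne_of_val_ne (by decide))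
  rw [← h]
  congr 1
  funext s
  fin_cases s <;> simp [Equiv.swap_apply_def] <;> rfl

lemma sw12 (x y z : H) :
    ExteriorAlgebra.ιMulti ℤ 3 ![x, z, y] = -ExteriorAlgebra.ιMulti ℤ 3 ![x, y, z] := by
  have h := (ExteriorAlgebra.ιMulti ℤ 3 (M := H)).map_swap (v := ![x, y, z])
    (i := (1 : Fin 3)) (j := 2) (Fin.ne_of_val_ne (by decide))
  rw [← h]
  congr 1
  funext s
  fin_cases s <;> simp [Equiv.swap_apply_def] <;> rfl

lemma rot3 (x y z : H) :
    ExteriorAlgebra.ιMulti ℤ 3 ![z, x, y] = ExteriorAlgebra.ιMulti ℤ 3 ![x, y, z] := by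
  calc ExteriorAlgebra.ιMulti ℤ 3 ![z, x, y] = -ExteriorAlgebra.ιMulti ℤ 3 ![x, z, y] := sw01 x z y
    _ = ExteriorAlgebra.ιMulti ℤ 3 ![x, y, z] := by rw [sw12, neg_neg]

lemma eta3 {X : Type*} (v : Fin 3 → X) : v = ![v 0, v 1, v 2] := by
  funext s
  fin_cases s <;> rfl

-- expansion
lemma expand3 (v : Fin 3 → H) :
    ExteriorAlgebra.ιMulti ℤ 3 v = ∑ r : Fin 3 → Fin g ⊕ Fin g,
      (∏ s : Fin 3, b.repr (v s) (r s)) • ExteriorAlgebra.ιMulti ℤ 3 (fun s => b (r s)) := by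
  have h1 : ExteriorAlgebra.ιMulti ℤ 3 v
      = ExteriorAlgebra.ιMulti ℤ 3 (fun s => ∑ a, b.repr (v s) a • b a) := by
    congr 1
    exact funext fun s => (b.sum_repr (v s)).symm
  rw [h1]
  rw [show (ExteriorAlgebra.ιMulti ℤ 3 (M := H)) (fun s => ∑ a, b.repr (v s) a • b a)
      = (ExteriorAlgebra.ιMulti ℤ 3 (M := H)).toMultilinearMap
          (fun s => ∑ a, b.repr (v s) a • b a) from rfl]
  rw [MultilinearMap.map_sum]
  refine Finset.sum_congr rfl fun r _ => ?_
  rw [MultilinearMap.map_smul_univ]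
  rfl

-- divisibility lemmas
lemma dvd0_iff (hg : 2 ≤ g) (i j : Fin g) : (g : ℤ) ∣ (i : ℤ) - (j : ℤ) ↔ i = j := by
  constructor
  · rintro ⟨c, hc⟩
    have hi : (i : ℤ) < g := by exact_mod_cast i.isLt
    have hj : (j : ℤ) < g := by exact_mod_cast j.isLt
    have hi0 : (0 : ℤ) ≤ i := Int.ofNat_nonneg _
    have hj0 : (0 : ℤ) ≤ j := Int.ofNat_nonneg _
    have hc0 : c = 0 := by
      rcases lt_trichotomy c 0 with h | h | h
      · nlinarith
      · exact h
      · nlinarith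
    rw [hc0, mul_zero, sub_eq_zero] at hc
    exact Fin.ext (by exact_mod_cast hc)
  · rintro rfl; simp

lemma fin_val_add_one [NeZero g] (j : Fin g) (hg : 2 ≤ g) :
    ((j + 1 : Fin g) : ℕ) = (j.val + 1) % g := by
  rw [Fin.val_add, Fin.val_one' g, Nat.mod_eq_of_lt (show 1 < g by omega)]

lemma dvd1_iff (hg : 2 ≤ g) [NeZero g] (i j : Fin g) :
    (g : ℤ) ∣ (i : ℤ) - (j : ℤ) - 1 ↔ i = j + 1 := by
  have hi : (i : ℤ) < g := by exact_mod_cast i.isLt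
  have hj : (j : ℤ) < g := by exact_mod_cast j.isLt
  have hi0 : (0 : ℤ) ≤ i := Int.ofNat_nonneg _
  have hj0 : (0 : ℤ) ≤ j := Int.ofNat_nonneg _
  have hval : ((j + 1 : Fin g) : ℕ) = (j.val + 1) % g := fin_val_add_one j hg
  constructor
  · rintro ⟨c, hc⟩
    have hcc : c = 0 ∨ c = -1 := by
      have l1 : -1 ≤ c := by nlinarith
      have l2 : c ≤ 0 := by nlinarith
      omega
    apply Fin.ext
    rcases hcc with rfl | rfl
    · rw [mul_zero] at hc
      have : (i : ℤ) = (j : ℤ) + 1 := by omega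
      have hjg : j.val + 1 < g := by omega
      rw [hval, Nat.mod_eq_of_lt hjg]
      omega
    · have : (i : ℤ) = (j : ℤ) + 1 - g := by omega
      have hjv : j.val + 1 = g := by omega
      rw [hval, hjv, Nat.mod_self]
      omega
  · rintro rfl
    rw [hval]
    by_cases hjg : j.val + 1 < g
    · rw [Nat.mod_eq_of_lt hjg]
      push_cast
      exact ⟨0, by ring⟩
    · have hjv : j.val + 1 = g := by omega
      rw [hjv, Nat.mod_self]
      push_cast
      exact ⟨-1, by omega⟩


noncomputable def lamB (t : Fin 3 → Fin g ⊕ Fin g) : ExteriorAlgebra ℤ H →ₗ[ℤ] ℤ :=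
  ExteriorAlgebra.liftAlternating (fun n => match n with
    | 3 => Matrix.detRowAlternating.compLinearMap (LinearMap.pi fun r => b.coord (t r))
    | _ => 0)

lemma lamB_iMulti (t : Fin 3 → Fin g ⊕ Fin g) (v : Fin 3 → H) :
    lamB b t (ExteriorAlgebra.ιMulti ℤ 3 v) =
      Matrix.det (Matrix.of fun s r => b.coord (t r) (v s)) := by
  rw [lamB, ExteriorAlgebra.liftAlternating_apply_ιMulti]
  rfl

lemma lamB_diag (t : Fin 3 → Fin g ⊕ Fin g) (hinj : Function.Injective t) :
    lamB b t (ExteriorAlgebra.ιMulti ℤ 3 (fun s => b (t s))) = 1 := by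
  rw [lamB_iMulti]
  have h : (Matrix.of fun s r => b.coord (t r) (b (t s))) = (1 : Matrix (Fin 3) (Fin 3) ℤ) := by
    ext s r
    simp only [Matrix.of_apply, coord_b, Matrix.one_apply, hinj.eq_iff]
  rw [h, Matrix.det_one]

lemma lamB_off (t t' : Fin 3 → Fin g ⊕ Fin g) (r₀ : Fin 3) (h : ∀ s, t' s ≠ t r₀) :
    lamB b t (ExteriorAlgebra.ιMulti ℤ 3 (fun s => b (t' s))) = 0 := by
  rw [lamB_iMulti]
  apply Matrix.det_eq_zero_of_column_eq_zero r₀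
  intro s
  simp [coord_b, h s]

def kk : Fin g ⊕ Fin g → ℕ := Sum.elim (fun i => 2 * i.val) (fun i => 2 * i.val + 1)

lemma kk_inj : Function.Injective (kk (g := g)) := by
  rintro (i | i) (j | j) h <;> simp only [kk, Sum.elim_inl, Sum.elim_inr] at h <;>
    first
      | (exact congrArg Sum.inl (Fin.ext (by omega)))
      | (exact congrArg Sum.inr (Fin.ext (by omega)))
      | omega

lemma inj3 {X : Type*} (k : X → ℕ) (t : Fin 3 → X) (h1 : k (t 0) < k (t 1))
    (h2 : k (t 1) < k (t 2)) : Function.Injective t := by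
  intro s s' h
  have hk := congrArg k h
  fin_cases s <;> fin_cases s' <;>
    simp_all only [Fin.zero_eta, Fin.mk_one, Fin.reduceFinMk, Fin.isValue] <;>
    first | rfl | omega

lemma mono3_eq {f f' : Fin 3 → ℕ} (hf : f 0 < f 1 ∧ f 1 < f 2) (hf' : f' 0 < f' 1 ∧ f' 1 < f' 2)
    (h1 : ∀ s, ∃ s', f s = f' s') : f = f' := by
  have get : ∀ s, f s = f' 0 ∨ f s = f' 1 ∨ f s = f' 2 := by
    intro s
    obtain ⟨s', hs'⟩ := h1 s
    fin_cases s' <;> tauto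
  have key : f 0 = f' 0 ∧ f 1 = f' 1 ∧ f 2 = f' 2 := by
    rcases get 0 with h | h | h <;> rcases get 1 with h' | h' | h' <;>
      rcases get 2 with h'' | h'' | h'' <;> omega
  funext s
  fin_cases s <;> simp [key.1, key.2.1, key.2.2]



def lv : Fin g ⊕ Fin g → Fin g := Sum.elim id id

lemma lv_inl (l : Fin g) : lv (Sum.inl l : Fin g ⊕ Fin g) = l := rfl
lemma lv_inr (l : Fin g) : lv (Sum.inr l : Fin g ⊕ Fin g) = l := rfl

end Aux


/-- With `H, Q, θ, u, c` as in the symplectic setting (`H` free of rank `2g`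
with symplectic basis `e, f`; `u(x) = θ∧x`; `c(x∧y∧z) = Q(x,y)z + Q(y,z)x + Q(z,x)y`),
define `I : Λ³H → Λ³H` by `I(ω) = (g−1)ω − u(c(ω))`.  Then `ker I = im u`, and `Λ³H`
decomposes as `u(H) ⊕ L` where `L` is spanned by (1) all `vᵢ∧vⱼ∧v_k` with `v_l ∈ {e_l, f_l}`
and `i<j<k`, and (2) all `vᵢ∧eⱼ∧fⱼ` with `vᵢ ∈ {eᵢ, fᵢ}` and `i−j ≢ 0, 1 (mod g)`.
In particular `V = Λ³H / u(H)` is torsion free. -/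
theorem stmt16 (g : ℕ) (hg : 2 ≤ g) (H : Type*) [AddCommGroup H] [Module ℤ H]
    (e f : Fin g → H) (b : Module.Basis (Fin g ⊕ Fin g) ℤ H)
    (hbe : ∀ i, b (Sum.inl i) = e i) (hbf : ∀ i, b (Sum.inr i) = f i)
    (Q : H →ₗ[ℤ] H →ₗ[ℤ] ℤ)
    (hQalt : ∀ x, Q x x = 0)
    (hQef : ∀ i j, Q (e i) (f j) = if i = j then 1 else 0)
    (hQee : ∀ i j, Q (e i) (e j) = 0) (hQff : ∀ i j, Q (f i) (f j) = 0)
    (u : H →ₗ[ℤ] ExteriorAlgebra ℤ H)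
    (hu : ∀ x, u x = ∑ i : Fin g, ExteriorAlgebra.ιMulti ℤ 3 ![e i, f i, x])
    (c : ExteriorAlgebra ℤ H →ₗ[ℤ] H)
    (hc : ∀ v : Fin 3 → H, c (ExteriorAlgebra.ιMulti ℤ 3 v) =
        Q (v 0) (v 1) • (v 2) + Q (v 1) (v 2) • (v 0) + Q (v 2) (v 0) • (v 1))
    (S₁ S₂ : Set (ExteriorAlgebra ℤ H))
    (hS₁ : S₁ = {w | ∃ i j k : Fin g, i < j ∧ j < k ∧
        ∃ x ∈ ({e i, f i} : Set H), ∃ y ∈ ({e j, f j} : Set H), ∃ z ∈ ({e k, f k} : Set H),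
          w = ExteriorAlgebra.ιMulti ℤ 3 ![x, y, z]})
    (hS₂ : S₂ = {w | ∃ i j : Fin g,
        ¬ ((g : ℤ) ∣ ((i : ℤ) - (j : ℤ))) ∧ ¬ ((g : ℤ) ∣ ((i : ℤ) - (j : ℤ) - 1)) ∧
        ∃ x ∈ ({e i, f i} : Set H), w = ExteriorAlgebra.ιMulti ℤ 3 ![x, e j, f j]})
    (L : Submodule ℤ (ExteriorAlgebra ℤ H)) (hL : L = Submodule.span ℤ (S₁ ∪ S₂)) :
    -- (a), (b): ker I = im u inside Λ³H
    (∀ ω ∈ (⋀[ℤ]^3 H : Submodule ℤ (ExteriorAlgebra ℤ H)),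
        (((g : ℤ) - 1) • ω - u (c ω) = 0 ↔ ω ∈ LinearMap.range u)) ∧
    -- (c): Λ³H = u(H) ⊕ L
    Disjoint (LinearMap.range u) L ∧
    LinearMap.range u ⊔ L = (⋀[ℤ]^3 H : Submodule ℤ (ExteriorAlgebra ℤ H)) ∧
    -- in particular, V = Λ³H / u(H) is torsion free
    (∀ ω ∈ (⋀[ℤ]^3 H : Submodule ℤ (ExteriorAlgebra ℤ H)), ∀ n : ℤ, n ≠ 0 →
        n • ω ∈ LinearMap.range u → ω ∈ LinearMap.range u) := by
  -- normalize the `Module ℤ H` instance to the canonical one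
  rename_i instMod
  have hinst : instMod = AddCommGroup.toIntModule H := by
    letI := AddCommGroup.uniqueIntModule (M := H)
    exact Subsingleton.elim _ _
  subst hinst
  haveI : NeZero g := ⟨by omega⟩
  -- replace e, f by basis vectors
  simp only [← hbe, ← hbf] at hu hc hS₁ hS₂ hQef hQee hQff
  clear hbe hbf
  set φ := phiB b with hφdef
  -- φ is a retraction of u
  have hφu : ∀ z : H, φ (u z) = z := by
    intro z
    rw [hu z, map_sum]
    calc ∑ i : Fin g, φ (ExteriorAlgebra.ιMulti ℤ 3 ![b (Sum.inl i), b (Sum.inr i), z])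
        = ∑ i : Fin g, PZ b (i + 1) z := by
          refine Finset.sum_congr rfl fun i _ => ?_
          rw [hφdef, phiB_iMulti, AA_efz b hg]
      _ = z := sum_PZ_succ b z
  -- φ vanishes on S₁ ∪ S₂
  have hφS : ∀ w ∈ S₁ ∪ S₂, φ w = 0 := by
    rintro w (hw | hw)
    · rw [hS₁] at hw
      obtain ⟨i, j, k, hij, hjk, x, hx, y, hy, z, hz, rfl⟩ := hw
      rw [hφdef, phiB_iMulti]
      exact AA_S1 b (Fin.ne_of_lt hij) (Fin.ne_of_lt (hij.trans hjk)) (Fin.ne_of_lt hjk)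
        (by simpa using hx) (by simpa using hy) (by simpa using hz)
    · rw [hS₂] at hw
      obtain ⟨i, j, hd0, hd1, x, hx, rfl⟩ := hw
      have hij : i ≠ j := fun h => hd0 ((dvd0_iff hg i j).mpr h)
      have hij1 : i ≠ j + 1 := fun h => hd1 ((dvd1_iff hg i j).mpr h)
      rw [hφdef, phiB_iMulti, AA_xef b hg i j hij x (by simpa using hx), if_neg hij1]
  -- c ∘ u = (g - 1) • id
  have hskew : ∀ x y : H, Q y x = -Q x y := by
    intro x y
    have h := hQalt (x + y)
    have hx := hQalt x
    have hy := hQalt y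
    simp only [map_add, LinearMap.add_apply] at h
    linarith
  have hQfe : ∀ i j, Q (b (Sum.inr i)) (b (Sum.inl j)) = if i = j then (-1 : ℤ) else 0 := by
    intro i j
    rw [hskew, hQef j i]
    by_cases h : i = j <;> simp [h, eq_comm]
  have hcu : ∀ z : H, c (u z) = ((g : ℤ) - 1) • z := by
    intro z
    rw [hu z, map_sum]
    have hterm : ∀ i : Fin g,
        c (ExteriorAlgebra.ιMulti ℤ 3 ![b (Sum.inl i), b (Sum.inr i), z])
        = z + (Q (b (Sum.inr i)) z • b (Sum.inl i) + Q z (b (Sum.inl i)) • b (Sum.inr i)) := by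
      intro i
      rw [hc]
      simp only [v3_0, v3_1, v3_2, hQef, if_pos rfl, if_true, one_smul]
      abel
    rw [Finset.sum_congr rfl fun i _ => hterm i, Finset.sum_add_distrib]
    have hLm : (∑ i : Fin g, (Q (b (Sum.inr i)) z • b (Sum.inl i)
        + Q z (b (Sum.inl i)) • b (Sum.inr i))) = -z := by
      have hmap : (∑ i : Fin g, ((Q (b (Sum.inr i))).smulRight (b (Sum.inl i))
          + (Q.flip (b (Sum.inl i))).smulRight (b (Sum.inr i))))
          = -(LinearMap.id : H →ₗ[ℤ] H) := by
        apply b.ext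
        rintro (j | j)
        · simp only [LinearMap.coe_sum, Finset.sum_apply, LinearMap.add_apply,
            LinearMap.smulRight_apply, LinearMap.flip_apply, LinearMap.neg_apply,
            LinearMap.id_apply, hQfe, hQee, zero_smul, add_zero]
          simp only [ite_smul, zero_smul, Finset.sum_ite_eq', Finset.sum_ite_eq,
            Finset.mem_univ, if_true, neg_smul, one_smul]
        · simp only [LinearMap.coe_sum, Finset.sum_apply, LinearMap.add_apply,
            LinearMap.smulRight_apply, LinearMap.flip_apply, LinearMap.neg_apply,
            LinearMap.id_apply, hQff, hQfe, zero_smul, zero_add]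
          simp only [ite_smul, zero_smul, Finset.sum_ite_eq', Finset.sum_ite_eq,
            Finset.mem_univ, if_true, neg_smul, one_smul]
      have happ := congrArg (fun (m : H →ₗ[ℤ] H) => m z) hmap
      simpa only [LinearMap.coe_sum, Finset.sum_apply, LinearMap.add_apply,
        LinearMap.smulRight_apply, LinearMap.flip_apply, LinearMap.neg_apply,
        LinearMap.id_apply] using happ
    rw [hLm, Finset.sum_const, Finset.card_univ, Fintype.card_fin]
    rw [sub_smul, one_smul]
    rw [← natCast_zsmul z g]
    abel
  -- range u and L lie in Λ³
  have hrange_le : LinearMap.range u ≤ (⋀[ℤ]^3 H : Submodule ℤ (ExteriorAlgebra ℤ H)) := by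
    rintro _ ⟨z, rfl⟩
    rw [hu z]
    exact Submodule.sum_mem _ fun i _ => ExteriorAlgebra.ιMulti_range ℤ 3 (Set.mem_range_self _)
  have hL_le : L ≤ (⋀[ℤ]^3 H : Submodule ℤ (ExteriorAlgebra ℤ H)) := by
    rw [hL, Submodule.span_le]
    rintro w (hw | hw)
    · rw [hS₁] at hw
      obtain ⟨i, j, k, _, _, x, _, y, _, z, _, rfl⟩ := hw
      exact ExteriorAlgebra.ιMulti_range ℤ 3 (Set.mem_range_self _)
    · rw [hS₂] at hw
      obtain ⟨i, j, _, _, x, _, rfl⟩ := hw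
      exact ExteriorAlgebra.ιMulti_range ℤ 3 (Set.mem_range_self _)
  set P : Submodule ℤ (ExteriorAlgebra ℤ H) := LinearMap.range u ⊔ L with hPdef
  -- the key generators lie in P
  have hW : ∀ (i j : Fin g) (x : H), (x = b (Sum.inl i) ∨ x = b (Sum.inr i)) →
      ExteriorAlgebra.ιMulti ℤ 3 ![x, b (Sum.inl j), b (Sum.inr j)] ∈ P := by
    intro i j x hx
    by_cases hij : i = j
    · subst hij
      rcases hx with rfl | rfl
      · rw [AlternatingMap.map_eq_zero_of_eq _ _ (show (![b (Sum.inl i), b (Sum.inl i),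
          b (Sum.inr i)]) 0 = (![b (Sum.inl i), b (Sum.inl i), b (Sum.inr i)]) 1 from rfl)
          (Fin.ne_of_val_ne (by decide))]
        exact Submodule.zero_mem _
      · rw [AlternatingMap.map_eq_zero_of_eq _ _ (show (![b (Sum.inr i), b (Sum.inl i),
          b (Sum.inr i)]) 0 = (![b (Sum.inr i), b (Sum.inl i), b (Sum.inr i)]) 2 from rfl)
          (Fin.ne_of_val_ne (by decide))]
        exact Submodule.zero_mem _
    · by_cases hij1 : i = j + 1
      · -- use u x
        have hux : ExteriorAlgebra.ιMulti ℤ 3 ![x, b (Sum.inl j), b (Sum.inr j)]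
            = u x - ∑ m ∈ Finset.univ.erase j,
                ExteriorAlgebra.ιMulti ℤ 3 ![x, b (Sum.inl m), b (Sum.inr m)] := by
          rw [hu x]
          rw [show (∑ m : Fin g, ExteriorAlgebra.ιMulti ℤ 3 ![b (Sum.inl m), b (Sum.inr m), x])
              = ∑ m : Fin g, ExteriorAlgebra.ιMulti ℤ 3 ![x, b (Sum.inl m), b (Sum.inr m)] from
            Finset.sum_congr rfl fun m _ => (rot3 _ _ _).symm]
          rw [← Finset.add_sum_erase _ _ (Finset.mem_univ j)]
          rw [add_sub_cancel_right]
        rw [hux]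
        apply Submodule.sub_mem
        · exact Submodule.mem_sup_left ⟨x, rfl⟩
        · apply Submodule.sum_mem
          intro m hm
          have hmj : m ≠ j := (Finset.mem_erase.mp hm).1
          by_cases hmi : m = i
          · subst hmi
            rcases hx with rfl | rfl
            · rw [AlternatingMap.map_eq_zero_of_eq _ _ (show (![b (Sum.inl m), b (Sum.inl m),
                b (Sum.inr m)]) 0 = (![b (Sum.inl m), b (Sum.inl m), b (Sum.inr m)]) 1 from rfl)
                (Fin.ne_of_val_ne (by decide))]
              exact Submodule.zero_mem _
            · rw [AlternatingMap.map_eq_zero_of_eq _ _ (show (![b (Sum.inr m), b (Sum.inl m),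
                b (Sum.inr m)]) 0 = (![b (Sum.inr m), b (Sum.inl m), b (Sum.inr m)]) 2 from rfl)
                (Fin.ne_of_val_ne (by decide))]
              exact Submodule.zero_mem _
          · apply Submodule.mem_sup_right
            rw [hL]
            apply Submodule.subset_span
            right
            rw [hS₂]
            refine ⟨i, m, fun h => hmi ((dvd0_iff hg i m).mp h).symm,
              fun h => hmj (by
                have := ((dvd1_iff hg i m).mp h).symm.trans hij1
                exact add_right_cancel this), x, ?_, rfl⟩
            rcases hx with rfl | rfl
            · exact Set.mem_insert _ _
            · exact Set.mem_insert_of_mem _ rfl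
      · apply Submodule.mem_sup_right
        rw [hL]
        apply Submodule.subset_span
        right
        rw [hS₂]
        refine ⟨i, j, fun h => hij ((dvd0_iff hg i j).mp h),
          fun h => hij1 ((dvd1_iff hg i j).mp h), x, ?_, rfl⟩
        rcases hx with rfl | rfl
        · exact Set.mem_insert _ _
        · exact Set.mem_insert_of_mem _ rfl
  -- sorted wedges lie in P
  have hsorted : ∀ a₀ a₁ a₂ : Fin g ⊕ Fin g, kk a₀ < kk a₁ → kk a₁ < kk a₂ →
      ExteriorAlgebra.ιMulti ℤ 3 ![b a₀, b a₁, b a₂] ∈ P := by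
    intro a₀ a₁ a₂ h01 h12
    by_cases e01 : lv a₀ = lv a₁
    · -- a₀ = inl l, a₁ = inr l
      obtain ⟨l, rfl, rfl⟩ : ∃ l, a₀ = Sum.inl l ∧ a₁ = Sum.inr l := by
        rcases a₀ with l | l <;> rcases a₁ with l' | l' <;>
          simp only [lv_inl, lv_inr, kk, Sum.elim_inl, Sum.elim_inr, Fin.ext_iff] at e01 h01
        · exfalso; omega
        · exact ⟨l, rfl, by rw [show l' = l from Fin.ext e01.symm]⟩
        · exfalso; omega
        · exfalso; omega
      rw [← rot3]
      rcases a₂ with m | m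
      · exact hW m l _ (Or.inl rfl)
      · exact hW m l _ (Or.inr rfl)
    · by_cases e12 : lv a₁ = lv a₂
      · obtain ⟨l, rfl, rfl⟩ : ∃ l, a₁ = Sum.inl l ∧ a₂ = Sum.inr l := by
          rcases a₁ with l | l <;> rcases a₂ with l' | l' <;>
            simp only [lv_inl, lv_inr, kk, Sum.elim_inl, Sum.elim_inr, Fin.ext_iff] at e12 h12
          · exfalso; omega
          · exact ⟨l, rfl, by rw [show l' = l from Fin.ext e12.symm]⟩
          · exfalso; omega
          · exfalso; omega
        rcases a₀ with m | m
        · exact hW m l _ (Or.inl rfl)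
        · exact hW m l _ (Or.inr rfl)
      · -- all levels distinct: S₁
        have hv01 : (lv a₀).val < (lv a₁).val := by
          rcases a₀ with l | l <;> rcases a₁ with l' | l' <;>
            simp only [lv_inl, lv_inr, kk, Sum.elim_inl, Sum.elim_inr, Fin.ext_iff] at e01 h01 ⊢ <;>
            omega
        have hv12 : (lv a₁).val < (lv a₂).val := by
          rcases a₁ with l | l <;> rcases a₂ with l' | l' <;>
            simp only [lv_inl, lv_inr, kk, Sum.elim_inl, Sum.elim_inr, Fin.ext_iff] at e12 h12 ⊢ <;>
            omega
        apply Submodule.mem_sup_right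
        rw [hL]
        apply Submodule.subset_span
        left
        rw [hS₁]
        have hmem : ∀ a : Fin g ⊕ Fin g,
            b a ∈ ({b (Sum.inl (lv a)), b (Sum.inr (lv a))} : Set H) := by
          rintro (l | l)
          · exact Set.mem_insert _ _
          · exact Set.mem_insert_of_mem _ rfl
        exact ⟨lv a₀, lv a₁, lv a₂, hv01, hv12, b a₀, hmem a₀, b a₁, hmem a₁, b a₂, hmem a₂, rfl⟩
  -- sorted set
  set St : Set (ExteriorAlgebra ℤ H) := {w | ∃ t : Fin 3 → Fin g ⊕ Fin g,
    (kk (t 0) < kk (t 1) ∧ kk (t 1) < kk (t 2)) ∧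
    w = ExteriorAlgebra.ιMulti ℤ 3 (fun s => b (t s))} with hStdef
  -- every basis wedge lies in the span of sorted wedges
  have hbr : ∀ r : Fin 3 → Fin g ⊕ Fin g,
      ExteriorAlgebra.ιMulti ℤ 3 (fun s => b (r s)) ∈ Submodule.span ℤ St := by
    intro r
    have heta : ExteriorAlgebra.ιMulti ℤ 3 (fun s => b (r s))
        = ExteriorAlgebra.ιMulti ℤ 3 ![b (r 0), b (r 1), b (r 2)] := by
      congr 1
      funext s
      fin_cases s <;> rfl
    have hzero : ∀ (s s' : Fin 3), s ≠ s' → r s = r s' →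
        ExteriorAlgebra.ιMulti ℤ 3 (fun s => b (r s)) ∈ Submodule.span ℤ St := by
      intro s s' hss hrr
      rw [AlternatingMap.map_eq_zero_of_eq (ExteriorAlgebra.ιMulti ℤ 3)
        (fun s => b (r s)) (i := s) (j := s') (congrArg b hrr) hss]
      exact Submodule.zero_mem _
    have hst : ∀ (t : Fin 3 → Fin g ⊕ Fin g), kk (t 0) < kk (t 1) → kk (t 1) < kk (t 2) →
        ExteriorAlgebra.ιMulti ℤ 3 ![b (t 0), b (t 1), b (t 2)] ∈ Submodule.span ℤ St := by
      intro t h1 h2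
      apply Submodule.subset_span
      refine ⟨t, ⟨h1, h2⟩, ?_⟩
      congr 1
      funext s
      fin_cases s <;> rfl
    rw [heta]
    rcases lt_trichotomy (kk (r 0)) (kk (r 1)) with h01 | h01 | h01
    · rcases lt_trichotomy (kk (r 1)) (kk (r 2)) with h12 | h12 | h12
      · exact hst r h01 h12
      · rw [← heta]; exact hzero 1 2 (Fin.ne_of_val_ne (by decide)) (kk_inj h12)
      · rcases lt_trichotomy (kk (r 0)) (kk (r 2)) with h02 | h02 | h02
        · -- order r0 r2 r1
          rw [sw12 (b (r 0)) (b (r 2)) (b (r 1))]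
          exact Submodule.neg_mem _ (hst ![r 0, r 2, r 1] h02 h12)
        · rw [← heta]; exact hzero 0 2 (Fin.ne_of_val_ne (by decide)) (kk_inj h02)
        · -- order r2 r0 r1
          rw [(rot3 (b (r 0)) (b (r 1)) (b (r 2))).symm]
          exact hst ![r 2, r 0, r 1] h02 h01
    · rw [← heta]; exact hzero 0 1 (Fin.ne_of_val_ne (by decide)) (kk_inj h01)
    · rcases lt_trichotomy (kk (r 1)) (kk (r 2)) with h12 | h12 | h12
      · rcases lt_trichotomy (kk (r 0)) (kk (r 2)) with h02 | h02 | h02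
        · -- order r1 r0 r2
          rw [sw01 (b (r 1)) (b (r 0)) (b (r 2))]
          exact Submodule.neg_mem _ (hst ![r 1, r 0, r 2] h01 h02)
        · rw [← heta]; exact hzero 0 2 (Fin.ne_of_val_ne (by decide)) (kk_inj h02)
        · -- order r1 r2 r0
          rw [rot3 (b (r 1)) (b (r 2)) (b (r 0))]
          exact hst ![r 1, r 2, r 0] h12 h02
      · rw [← heta]; exact hzero 1 2 (Fin.ne_of_val_ne (by decide)) (kk_inj h12)
      · -- order r2 r1 r0
        rw [show ExteriorAlgebra.ιMulti ℤ 3 ![b (r 0), b (r 1), b (r 2)]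
            = -ExteriorAlgebra.ιMulti ℤ 3 ![b (r 2), b (r 1), b (r 0)] by
          rw [sw12 (b (r 0)) (b (r 2)) (b (r 1))]
          rw [show ExteriorAlgebra.ιMulti ℤ 3 ![b (r 0), b (r 2), b (r 1)]
              = -ExteriorAlgebra.ιMulti ℤ 3 ![b (r 2), b (r 0), b (r 1)] from
            sw01 (b (r 2)) (b (r 0)) (b (r 1))]
          rw [show ExteriorAlgebra.ιMulti ℤ 3 ![b (r 2), b (r 1), b (r 0)]
              = -ExteriorAlgebra.ιMulti ℤ 3 ![b (r 2), b (r 0), b (r 1)] from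
            sw12 (b (r 2)) (b (r 0)) (b (r 1))]]
        exact Submodule.neg_mem _ (hst ![r 2, r 1, r 0] h12 h01)
  -- Λ³ ≤ span of sorted wedges
  have hspan3 : (⋀[ℤ]^3 H : Submodule ℤ (ExteriorAlgebra ℤ H)) ≤ Submodule.span ℤ St := by
    rw [← ExteriorAlgebra.ιMulti_span_fixedDegree ℤ 3 (M := H), Submodule.span_le]
    rintro w ⟨v, rfl⟩
    rw [expand3 b v]
    exact Submodule.sum_mem _ fun r _ => Submodule.smul_mem _ _ (hbr r)
  -- sorted wedges lie in P
  have hStP : St ⊆ (P : Set (ExteriorAlgebra ℤ H)) := by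
    rintro w ⟨t, ⟨h1, h2⟩, rfl⟩
    have heta : ExteriorAlgebra.ιMulti ℤ 3 (fun s => b (t s))
        = ExteriorAlgebra.ιMulti ℤ 3 ![b (t 0), b (t 1), b (t 2)] := by
      congr 1
      funext s
      fin_cases s <;> rfl
    rw [heta]
    exact hsorted (t 0) (t 1) (t 2) h1 h2
  -- Λ³ is torsion-free
  have htors : ∀ ω ∈ (⋀[ℤ]^3 H : Submodule ℤ (ExteriorAlgebra ℤ H)), ∀ n : ℤ, n ≠ 0 →
      n • ω = 0 → ω = 0 := by
    intro ω hω n hn h0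
    obtain ⟨cf, hsupp, hsum⟩ := Submodule.mem_span_set.mp (hspan3 hω)
    have hcoef : ∀ w ∈ cf.support, cf w = 0 := by
      intro w₀ hw₀
      obtain ⟨t₀, ⟨ht1, ht2⟩, hw₀e⟩ := hsupp hw₀
      have hlam : lamB b t₀ ω = cf w₀ := by
        rw [← hsum, map_finsuppSum, Finsupp.sum]
        rw [Finset.sum_eq_single w₀]
        · rw [hw₀e, map_smul, lamB_diag b t₀ (inj3 kk t₀ ht1 ht2), smul_eq_mul, mul_one]
        · intro w hw hne
          obtain ⟨t, ⟨hta, htb⟩, hwe⟩ := hsupp hw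
          rw [map_smul, smul_eq_mul]
          by_cases htt : t = t₀
          · exact absurd (hwe.trans (htt ▸ hw₀e.symm)) hne
          · have hcol : ∃ r₀ : Fin 3, ∀ s, t s ≠ t₀ r₀ := by
              by_contra hc
              push_neg at hc
              have hkk : (fun s => kk (t₀ s)) = (fun s => kk (t s)) := by
                refine mono3_eq ⟨ht1, ht2⟩ ⟨hta, htb⟩ fun s => ?_
                obtain ⟨s', hs'⟩ := hc s
                exact ⟨s', by rw [hs']⟩
              have : t₀ = t := funext fun s => kk_inj (congrFun hkk s)
              exact htt this.symm
            obtain ⟨r₀, hr₀⟩ := hcol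
            rw [hwe, lamB_off b t₀ t r₀ hr₀, mul_zero]
        · intro h
          exact absurd hw₀ h
      have h1 : n * cf w₀ = 0 := by
        have := congrArg (lamB b t₀) h0
        rw [map_smul, smul_eq_mul, hlam, map_zero] at this
        exact this
      rcases mul_eq_zero.mp h1 with h | h
      · exact absurd h hn
      · exact h
    rw [← hsum, Finsupp.sum]
    exact Finset.sum_eq_zero fun w hw => by rw [hcoef w hw, zero_smul]
  have hg1 : ((g : ℤ) - 1) ≠ 0 := by
    have : (2 : ℤ) ≤ (g : ℤ) := by exact_mod_cast hg
    omega
  refine ⟨?_, ?_, ?_, ?_⟩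
  · -- ker I = range u
    intro ω hω
    constructor
    · intro h0
      rw [sub_eq_zero] at h0
      have h2 : ((g : ℤ) - 1) • φ ω = c ω := by
        have := congrArg φ h0
        rw [map_smul, hφu (c ω)] at this
        exact this
      have h3 : ((g : ℤ) - 1) • (ω - u (φ ω)) = 0 := by
        rw [smul_sub, h0, ← map_smul, h2, sub_self]
      have h4 : ω - u (φ ω) ∈ (⋀[ℤ]^3 H : Submodule ℤ (ExteriorAlgebra ℤ H)) :=
        Submodule.sub_mem _ hω (hrange_le ⟨φ ω, rfl⟩)
      have h5 := htors _ h4 _ hg1 h3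
      rw [sub_eq_zero] at h5
      exact ⟨φ ω, h5.symm⟩
    · rintro ⟨z, rfl⟩
      rw [hcu z, map_smul, sub_self]
  · -- disjointness
    rw [Submodule.disjoint_def]
    rintro x ⟨z, rfl⟩ hxL
    have h1 : φ (u z) = 0 := by
      have hker : L ≤ LinearMap.ker φ := by
        rw [hL, Submodule.span_le]
        intro w hw
        exact LinearMap.mem_ker.mpr (hφS w hw)
      exact hker hxL
    rw [hφu z] at h1
    rw [h1, map_zero]
  · -- sup = Λ³
    refine le_antisymm (sup_le hrange_le hL_le) ?_
    intro w hw
    have h1 := hspan3 hw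
    have h2 : Submodule.span ℤ St ≤ P := Submodule.span_le.mpr hStP
    exact h2 h1
  · -- torsion-freeness of the quotient
    rintro ω hω n hn ⟨z, hz⟩
    have h2 : z = n • φ ω := by
      have := congrArg φ hz
      rw [hφu z, map_smul] at this
      exact this
    have h3 : n • (ω - u (φ ω)) = 0 := by
      rw [smul_sub, ← map_smul, ← h2, hz, sub_self]
    have h4 : ω - u (φ ω) ∈ (⋀[ℤ]^3 H : Submodule ℤ (ExteriorAlgebra ℤ H)) :=
      Submodule.sub_mem _ hω (hrange_le ⟨φ ω, rfl⟩)
    have h5 := htors _ h4 _ hn h3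
    rw [sub_eq_zero] at h5
    exact ⟨φ ω, h5.symm⟩
end

section
/- Let H be a rank-2 situation: a vector space with nilpotent N satisfying N² = 0, viewed as monodromy logarithms N₁ = N₂ = N of a local system on (Δ*)². For Nh, Nk ∈ NH identified with classes in IH¹ via the map Nv ↦ (0, Nv) ∈ B¹, and a polarization-type bilinear form Q on H, the asymptotic height pairing is h_Q(t)(Nh, Nk) = (t₁t₂/(t₁+t₂))·Q(h, Nk) for (t₁,t₂) ∈ ℚ²_{≥0} \ {(0,0)}, and vanishes at t = (0,0). -/
open Finset

/-- Let `H` carry a nilpotent `N` with `N² = 0`, viewed as the common monodromy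
logarithm `N₁ = N₂ = N` of a local system on `(Δ*)²`, and let `Q` be a polarization-type
bilinear form (with the convention `Q(Nx, y) = Q(x, Ny)`).  Identifying `NH ≅ IH¹` via
`Nv ↦ (0, Nv) ∈ B¹`, the asymptotic height pairing `h_Q(t)(Nh, Nk) = q_t(a_Q α, β(t))`
— where `α = Nh ⊗ e₂`, `a_Q(Nh) = N*(Q(h,·))`, and
`β(t) = −(t₂/(t₁+t₂)) Nk ⊗ e₁ + (t₁/(t₁+t₂)) Nk ⊗ e₂` (and `β(0) = Nk ⊗ e₂`) —
equals `(t₁t₂/(t₁+t₂))·Q(h, Nk)` for `(t₁,t₂) ∈ ℚ²_{≥0} \ {(0,0)}`, and vanishes at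
`t = (0,0)`.  The pairing `q_t` is represented at witness level as in the partial Koszul
complex: `q_t(∑ N_I*(bD I) ⊗ e_I, ∑ N_I (a I) ⊗ e_I) = ∑_I t_I · (bD I)(N_I (a I))`. -/
theorem stmt17 (H : Type*) [AddCommGroup H] [Module ℚ H] [FiniteDimensional ℚ H]
    (N : Module.End ℚ H) (hN2 : N * N = 0)
    (Q : H →ₗ[ℚ] H →ₗ[ℚ] ℚ)
    (hQN : ∀ x y, Q (N x) y = Q x (N y))
    (t₁ t₂ : ℚ) (ht₁ : 0 ≤ t₁) (ht₂ : 0 ≤ t₂)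
    (t : Fin 2 → ℚ) (ht : t = ![t₁, t₂])
    (NI : Finset (Fin 2) → Module.End ℚ H) (hNI : ∀ I, NI I = N ^ I.card)
    (q : (Finset (Fin 2) → H) → (Finset (Fin 2) → Module.Dual ℚ H) → ℚ)
    (hq : ∀ a bD, q a bD = ∑ I : Finset (Fin 2), (∏ i ∈ I, t i) * (bD I) ((NI I) (a I)))
    (h k : H)
    -- dual-side witness of `a_Q(α)` for `α = Nh ⊗ e₂`: `a_Q(Nh) = N*(Q(h,·))`
    (bD : Finset (Fin 2) → Module.Dual ℚ H)
    (hbD : ∀ I, bD I = if I = ({1} : Finset (Fin 2)) then Q h else 0)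
    -- H-side witness of `β(t)`
    (aW : Finset (Fin 2) → H)
    (haW : (t₁, t₂) ≠ (0, 0) → ∀ I, aW I =
        if I = ({0} : Finset (Fin 2)) then (-(t₂ / (t₁ + t₂))) • k
        else if I = ({1} : Finset (Fin 2)) then (t₁ / (t₁ + t₂)) • k else 0)
    (haW0 : (t₁, t₂) = (0, 0) → ∀ I, aW I = if I = ({1} : Finset (Fin 2)) then k else 0) :
    q aW bD = if (t₁, t₂) = (0, 0) then 0 else (t₁ * t₂ / (t₁ + t₂)) * Q h (N k) := by
  subst ht
  rw [hq]
  rw [Finset.sum_eq_single ({1} : Finset (Fin 2))]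
  · rw [hbD]
    simp only [if_pos rfl, hNI]
    have hcard : ({1} : Finset (Fin 2)).card = 1 := rfl
    rw [hcard, pow_one]
    by_cases h0 : (t₁, t₂) = (0, 0)
    · rw [if_pos h0]
      have : t₂ = 0 := congrArg Prod.snd h0
      simp [this]
    · rw [if_neg h0, haW h0]
      have h01 : ({1} : Finset (Fin 2)) ≠ ({0} : Finset (Fin 2)) := by decide
      rw [if_neg h01, if_pos rfl]
      simp only [map_smul, smul_eq_mul]
      have : (∏ i ∈ ({1} : Finset (Fin 2)), (![t₁, t₂]) i) = t₂ := by simp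
      rw [this]
      ring_nf
      simp
  · intro I _ hI
    rw [hbD, if_neg hI]
    simp
  · simp
end

section
/- Let V be a finite dimensional vector space over a field of characteristic zero with an increasing filtration W, and let N be a nilpotent endomorphism preserving W. If the relative weight filtration M = M(N,W) exists, it is unique: there is at most one increasing filtration M satisfying (a) N(M_k) ⊆ M_{k−2} for all k, and (b) for all k, ℓ ≥ 0, N^ℓ : Gr^M_{ℓ+k} Gr^W_k → Gr^M_{k−ℓ} Gr^W_k is an isomorphism. -/
/-- The image of `M j ⊓ W k` in `Gr^W_k = W k / W (k-1)`, encoded as the submodule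
`(M j ⊓ W k) ⊔ W (k-1)` of `V` (so that statements about the induced filtration on `Gr^W_k`
become lattice statements about these submodules). -/
def grPiece {K V : Type*} [Field K] [AddCommGroup V] [Module K V]
    (W M : ℤ → Submodule K V) (k j : ℤ) : Submodule K V :=
  (M j ⊓ W k) ⊔ W (k - 1)

/-- `M` is a relative weight filtration of `W` with respect to `N`:
(a) `N(M_k) ⊆ M_{k-2}` for all `k`, and
(b) for all `k` and `ℓ ≥ 0`, `N^ℓ : Gr^M_{k+ℓ} Gr^W_k → Gr^M_{k-ℓ} Gr^W_k` is an
isomorphism (expressed via `grPiece`: surjectivity as a `⊔`-equation, injectivity as a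
`⊓ ≤` inclusion). -/
def IsRelWeightFiltration {K V : Type*} [Field K] [AddCommGroup V] [Module K V]
    (N : Module.End K V) (W M : ℤ → Submodule K V) : Prop :=
  Monotone M ∧ (∃ a, ∀ k ≤ a, M k = ⊥) ∧ (∃ b, ∀ k, b ≤ k → M k = ⊤) ∧
  (∀ k : ℤ, (M k).map N ≤ M (k - 2)) ∧
  (∀ (k : ℤ) (ℓ : ℕ),
    (Submodule.map (N ^ ℓ) (grPiece W M k (k + ℓ)) ⊔ grPiece W M k (k - ℓ - 1) =
        grPiece W M k (k - ℓ)) ∧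
    (grPiece W M k (k + ℓ) ⊓ Submodule.comap (N ^ ℓ) (grPiece W M k (k - ℓ - 1)) ≤
        grPiece W M k (k + ℓ - 1)))

section Aux

variable {K V : Type*} [Field K] [AddCommGroup V] [Module K V]
variable {N : Module.End K V} {W : ℤ → Submodule K V}

/-- Iterates of `N` preserve `W`. -/
lemma powW (hNW : ∀ k, (W k).map N ≤ W k) (m : ℕ) {k : ℤ} {x : V}
    (hx : x ∈ W k) : (N ^ m) x ∈ W k := by
  induction m with
  | zero => simpa using hx
  | succ m ih =>
      have h : (N ^ (m + 1)) x = N ((N ^ m) x) := by rw [pow_succ']; rfl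
      rw [h]
      exact hNW k ⟨_, ih, rfl⟩

/-- Iterates of `N` shift a filtration satisfying axiom (a). -/
lemma powM (M : ℤ → Submodule K V) (hMN : ∀ q, (M q).map N ≤ M (q - 2))
    (m : ℕ) {q : ℤ} {x : V} (hx : x ∈ M q) :
    (N ^ m) x ∈ M (q - 2 * m) := by
  induction m with
  | zero => simpa using hx
  | succ m ih =>
      have h1 : (N ^ (m + 1)) x = N ((N ^ m) x) := by rw [pow_succ']; rfl
      rw [h1]
      have h2 := hMN (q - 2 * m) ⟨_, ih, rfl⟩
      have e : q - 2 * (m : ℤ) - 2 = q - 2 * ((m + 1 : ℕ) : ℤ) := by push_cast; ring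
      rwa [e] at h2

/-- Kernel-descent lemma: an element of `M p ⊓ W k₀` whose `(p - k₀)`-th `N`-iterate lies
in `M (2k₀ - p - 1)` already lies in `M (p - 1)`.  Proved by descending induction on `k₀`
using the injectivity half of axiom (b). -/
lemma lemR (M : ℤ → Submodule K V) (hmono : Monotone M) (aW : ℤ)
    (hWbot : ∀ k ≤ aW, W k = ⊥)
    (hMN : ∀ q, (M q).map N ≤ M (q - 2))
    (hNW : ∀ k, (W k).map N ≤ W k)
    (hinj : ∀ (k : ℤ) (ℓ : ℕ),
      grPiece W M k (k + ℓ) ⊓ Submodule.comap (N ^ ℓ) (grPiece W M k (k - ℓ - 1)) ≤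
        grPiece W M k (k + ℓ - 1))
    (p : ℤ) :
    ∀ (n : ℕ) (k₀ : ℤ), k₀ ≤ aW + n → k₀ ≤ p → ∀ d : V, d ∈ M p → d ∈ W k₀ →
      (N ^ (p - k₀).toNat) d ∈ M (2 * k₀ - p - 1) → d ∈ M (p - 1) := by
  intro n
  induction n with
  | zero =>
      intro k₀ hk _ d _ hdW _
      rw [hWbot k₀ (by omega)] at hdW
      simp only [Submodule.mem_bot] at hdW
      subst hdW
      exact zero_mem _
  | succ n IH =>
      intro k₀ hk hkp d hdM hdW hdN
      set ℓ : ℕ := (p - k₀).toNat with hℓdef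
      have hℓ : (ℓ : ℤ) = p - k₀ := by omega
      have h1 : d ∈ grPiece W M k₀ (k₀ + ℓ) := by
        have e : k₀ + (ℓ : ℤ) = p := by omega
        rw [grPiece, e]
        exact Submodule.mem_sup_left ⟨hdM, hdW⟩
      have h2 : d ∈ Submodule.comap (N ^ ℓ) (grPiece W M k₀ (k₀ - ℓ - 1)) := by
        have e : k₀ - (ℓ : ℤ) - 1 = 2 * k₀ - p - 1 := by omega
        rw [Submodule.mem_comap, grPiece, e]
        exact Submodule.mem_sup_left ⟨hdN, powW hNW ℓ hdW⟩
      have h3 := hinj k₀ ℓ ⟨h1, h2⟩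
      rw [grPiece] at h3
      have e2 : k₀ + (ℓ : ℤ) - 1 = p - 1 := by omega
      rw [e2] at h3
      obtain ⟨y, hy, w, hw, hyw⟩ := Submodule.mem_sup.mp h3
      have hwd : w = d - y := by rw [← hyw]; abel
      have hwM : w ∈ M p := by
        rw [hwd]
        exact sub_mem hdM (hmono (by omega : p - 1 ≤ p) hy.1)
      have hNw : (N ^ (p - (k₀ - 1)).toNat) w ∈ M (2 * (k₀ - 1) - p - 1) := by
        have hen : (p - (k₀ - 1)).toNat = ℓ + 1 := by omega
        rw [hen]
        have h4 : (N ^ (ℓ + 1)) w = N ((N ^ ℓ) w) := by rw [pow_succ']; rfl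
        have h5 : (N ^ ℓ) w = (N ^ ℓ) d - (N ^ ℓ) y := by rw [hwd]; exact map_sub _ _ _
        have h6 : (N ^ ℓ) y ∈ M (2 * k₀ - p - 1) := by
          have := powM M hMN ℓ hy.1
          have e : p - 1 - 2 * (ℓ : ℤ) = 2 * k₀ - p - 1 := by omega
          rwa [e] at this
        have h7 : (N ^ ℓ) w ∈ M (2 * k₀ - p - 1) := by rw [h5]; exact sub_mem hdN h6
        rw [h4]
        have h8 := hMN (2 * k₀ - p - 1) ⟨_, h7, rfl⟩
        have e : 2 * k₀ - p - 1 - 2 = 2 * (k₀ - 1) - p - 1 := by ring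
        rwa [e] at h8
      have hwM1 : w ∈ M (p - 1) := IH (k₀ - 1) (by omega) (by omega) w hwM hw hNw
      rw [← hyw]
      exact add_mem hy.1 hwM1

/-- Expansion lemma via the surjectivity half of axiom (b): any element of
`grPiece W M k (k - r)` can be written as `N^c v + w` where `v` is a sum of
`N^(r+m-c)`-images (hence lies in `G`) and `w` lies in `grPiece W M k (k - r - s)`. -/
lemma lemE2 (M : ℤ → Submodule K V) (hNW : ∀ k, (W k).map N ≤ W k)
    (hsurj : ∀ (k : ℤ) (ℓ : ℕ),
      Submodule.map (N ^ ℓ) (grPiece W M k (k + ℓ)) ⊔ grPiece W M k (k - ℓ - 1) =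
        grPiece W M k (k - ℓ))
    (k : ℤ) (c r : ℕ) (hcr : c ≤ r) (G : Submodule K V)
    (hG : ∀ m : ℕ, Submodule.map (N ^ (r + m - c)) (M (k + (r : ℤ) + (m : ℤ)) ⊓ W k) ≤ G) :
    ∀ (s : ℕ) (u : V), u ∈ grPiece W M k (k - r) →
      ∃ v w : V, v ∈ G ∧ v ∈ W k ∧ w ∈ grPiece W M k (k - r - s) ∧ u = (N ^ c) v + w := by
  intro s
  induction s with
  | zero =>
      intro u hu
      exact ⟨0, u, zero_mem _, zero_mem _, by simpa using hu, by simp⟩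
  | succ s IH =>
      intro u hu
      obtain ⟨v, w, hvG, hvW, hw, huvw⟩ := IH u hu
      have e1 : k - (r : ℤ) - (s : ℤ) = k - ((r + s : ℕ) : ℤ) := by push_cast; ring
      rw [e1, ← hsurj k (r + s)] at hw
      obtain ⟨z, hz, w', hw', hzw⟩ := Submodule.mem_sup.mp hw
      obtain ⟨t, ht, hzt⟩ := hz
      rw [grPiece] at ht
      obtain ⟨y, hy, ω, hω, hyω⟩ := Submodule.mem_sup.mp ht
      refine ⟨v + (N ^ (r + s - c)) y, (N ^ (r + s)) ω + w', ?_, ?_, ?_, ?_⟩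
      · refine add_mem hvG (hG s ?_)
        refine Submodule.mem_map.mpr ⟨y, ?_, rfl⟩
        have e2 : k + ((r + s : ℕ) : ℤ) = k + (r : ℤ) + (s : ℤ) := by push_cast; ring
        rw [← e2]
        exact hy
      · exact add_mem hvW (powW hNW _ hy.2)
      · have e3 : k - (r : ℤ) - ((s + 1 : ℕ) : ℤ) = k - ((r + s : ℕ) : ℤ) - 1 := by
          push_cast; ring
        rw [e3]
        refine add_mem ?_ hw'
        rw [grPiece]
        exact Submodule.mem_sup_right (powW hNW _ hω)
      · have hpow : (N ^ c) ((N ^ (r + s - c)) y) = (N ^ (r + s)) y := by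
          rw [← Module.End.mul_apply, ← pow_add]
          congr 2
          omega
        rw [map_add, hpow, huvw, ← hzw, ← hzt, ← hyω, map_add]
        abel

/-- One-sided comparison: under the axioms for both `M` and `M'`,
`M j ⊓ W k ≤ M' j` for all `k`, `j`. -/
lemma oneSide (N : Module.End K V) (W : ℤ → Submodule K V) (aW : ℤ)
    (hWbot : ∀ k ≤ aW, W k = ⊥)
    (hNW : ∀ k, (W k).map N ≤ W k)
    (M M' : ℤ → Submodule K V)
    (hM : IsRelWeightFiltration N W M) (hM' : IsRelWeightFiltration N W M') :
    ∀ (k j : ℤ), M j ⊓ W k ≤ M' j := by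
  obtain ⟨hMmono, ⟨aM, hMbot⟩, ⟨bM, hMtop⟩, hMN, hMgr⟩ := hM
  obtain ⟨hM'mono, ⟨aM', hM'bot⟩, ⟨bM', hM'top⟩, hM'N, hM'gr⟩ := hM'
  have hsurj : ∀ (k : ℤ) (ℓ : ℕ),
      Submodule.map (N ^ ℓ) (grPiece W M k (k + ℓ)) ⊔ grPiece W M k (k - ℓ - 1) =
        grPiece W M k (k - ℓ) := fun k ℓ => (hMgr k ℓ).1
  have hinj' : ∀ (k : ℤ) (ℓ : ℕ),
      grPiece W M' k (k + ℓ) ⊓ Submodule.comap (N ^ ℓ) (grPiece W M' k (k - ℓ - 1)) ≤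
        grPiece W M' k (k + ℓ - 1) := fun k ℓ => (hM'gr k ℓ).2
  have key : ∀ (n : ℕ) (k : ℤ), k ≤ aW + n → ∀ j, M j ⊓ W k ≤ M' j := by
    intro n
    induction n with
    | zero =>
        intro k hk j
        rw [hWbot k (by omega)]
        simp
    | succ n IHS =>
        intro k hk j
        suffices h : ∀ (m : ℕ) (j : ℤ), max bM bM' - m ≤ j → M j ⊓ W k ≤ M' j by
          exact h (max bM bM' - j).toNat j (by omega)
        intro m
        induction m with
        | zero =>
            intro j hj
            have hbj : bM' ≤ j := le_trans (le_max_right bM bM') (by simpa using hj)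
            rw [hM'top j hbj]
            exact le_top
        | succ m IHT =>
            intro j hj
            by_cases hjm : max bM bM' - m ≤ j
            · exact IHT j hjm
            have hT : ∀ i : ℤ, j < i → M i ⊓ W k ≤ M' i := fun i hi => IHT i (by omega)
            have hS : ∀ j' : ℤ, M j' ⊓ W (k - 1) ≤ M' j' :=
              fun j' => IHS (k - 1) (by omega) j'
            intro x hx
            obtain ⟨hxM, hxW⟩ := hx
            by_cases hjk : j < k
            · -- Case (i): `j < k`; expand `x` itself using surjectivity.
              set r : ℕ := (k - j).toNat with hrdef
              have hr : (r : ℤ) = k - j := by omega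
              have hGi : ∀ m' : ℕ,
                  Submodule.map (N ^ (r + m' - 0)) (M (k + (r : ℤ) + (m' : ℤ)) ⊓ W k) ≤
                    M j ⊓ M' j := by
                intro m' z hz
                obtain ⟨y, hy, rfl⟩ := hz
                have hy' : y ∈ M' (k + (r : ℤ) + (m' : ℤ)) :=
                  hT _ (by omega) ⟨hy.1, hy.2⟩
                have hz1 : (N ^ (r + m' - 0)) y ∈ M j := by
                  have := powM M hMN (r + m' - 0) hy.1
                  exact hMmono (by omega) this
                have hz2 : (N ^ (r + m' - 0)) y ∈ M' j := by
                  have := powM M' hM'N (r + m' - 0) hy'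
                  exact hM'mono (by omega) this
                exact ⟨hz1, hz2⟩
              have hxgr : x ∈ grPiece W M k (k - (r : ℤ)) := by
                rw [grPiece]
                have e : k - (r : ℤ) = j := by omega
                rw [e]
                exact Submodule.mem_sup_left ⟨hxM, hxW⟩
              set s : ℕ := (k - (r : ℤ) - aM).toNat with hsdef
              obtain ⟨v, w, hvG, hvW, hwgr, huvw⟩ :=
                lemE2 M hNW hsurj k 0 r (Nat.zero_le r) (M j ⊓ M' j) hGi s x hxgr
              have hwW : w ∈ W (k - 1) := by
                rw [grPiece, hMbot (k - (r : ℤ) - (s : ℤ)) (by omega)] at hwgr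
                simpa using hwgr
              have hxvw : x = v + w := by simpa using huvw
              have hwM : w ∈ M j := by
                have : w = x - v := by rw [hxvw]; abel
                rw [this]
                exact sub_mem hxM hvG.1
              have hwM' : w ∈ M' j := hS j ⟨hwM, hwW⟩
              rw [hxvw]
              exact add_mem hvG.2 hwM'
            · -- Case (ii): `k ≤ j`; split off the primitive part and use `lemR`.
              set ℓ : ℕ := (j - k).toNat with hℓdef
              have hℓ : (ℓ : ℤ) = j - k := by omega
              set c : ℕ := ℓ + 1 with hcdef
              set r : ℕ := ℓ + 2 with hrdef
              have hugr : (N ^ c) x ∈ grPiece W M k (k - (r : ℤ)) := by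
                rw [grPiece]
                have huM := powM M hMN c hxM
                have e : j - 2 * (c : ℤ) = k - (r : ℤ) := by omega
                rw [e] at huM
                exact Submodule.mem_sup_left ⟨huM, powW hNW c hxW⟩
              have hGii : ∀ m' : ℕ,
                  Submodule.map (N ^ (r + m' - c)) (M (k + (r : ℤ) + (m' : ℤ)) ⊓ W k) ≤
                    M j ⊓ M' j := by
                intro m' z hz
                obtain ⟨y, hy, rfl⟩ := hz
                have hy' : y ∈ M' (k + (r : ℤ) + (m' : ℤ)) :=
                  hT _ (by omega) ⟨hy.1, hy.2⟩
                have hexp : (r + m' - c : ℕ) = m' + 1 := by omega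
                have hz1 : (N ^ (r + m' - c)) y ∈ M j := by
                  have := powM M hMN (r + m' - c) hy.1
                  exact hMmono (by omega) this
                have hz2 : (N ^ (r + m' - c)) y ∈ M' j := by
                  have := powM M' hM'N (r + m' - c) hy'
                  exact hM'mono (by omega) this
                exact ⟨hz1, hz2⟩
              set s : ℕ := (k - (r : ℤ) - aM).toNat with hsdef
              obtain ⟨v, w, hvG, hvW, hwgr, huvw⟩ :=
                lemE2 M hNW hsurj k c r (by omega) (M j ⊓ M' j) hGii s ((N ^ c) x) hugr
              have hwW : w ∈ W (k - 1) := by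
                rw [grPiece, hMbot (k - (r : ℤ) - (s : ℤ)) (by omega)] at hwgr
                simpa using hwgr
              have hNx₁ : (N ^ c) (x - v) = w := by
                rw [map_sub, huvw]; abel
              have hx₁M : x - v ∈ M j := sub_mem hxM hvG.1
              have hx₁W : x - v ∈ W k := sub_mem hxW hvW
              have hwM : w ∈ M (2 * k - j - 2) := by
                have := powM M hMN c hx₁M
                have e : j - 2 * (c : ℤ) = 2 * k - j - 2 := by omega
                rw [e] at this
                rwa [hNx₁] at this
              have hwM' : w ∈ M' (2 * k - j - 2) := hS (2 * k - j - 2) ⟨hwM, hwW⟩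
              have hx₁M'1 : x - v ∈ M' (j + 1) :=
                hT (j + 1) (by omega) ⟨hMmono (by omega) hx₁M, hx₁W⟩
              have hx₁M' : x - v ∈ M' j := by
                have hNd : (N ^ ((j + 1) - k).toNat) (x - v) ∈ M' (2 * k - (j + 1) - 1) := by
                  have e : ((j + 1) - k).toNat = c := by omega
                  rw [e, hNx₁]
                  have e2 : 2 * k - (j + 1) - 1 = 2 * k - j - 2 := by ring
                  rw [e2]
                  exact hwM'
                have := lemR M' hM'mono aW hWbot hM'N hNW hinj' (j + 1)
                  (k - aW).toNat k (by omega) (by omega) (x - v) hx₁M'1 hx₁W hNd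
                have e : j + 1 - 1 = j := by ring
                rwa [e] at this
              have : x = v + (x - v) := by abel
              rw [this]
              exact add_mem hvG.2 hx₁M'
  intro k j
  exact key (k - aW).toNat k (by omega) j

end Aux

/-- Let `V` be a finite dimensional vector space over a field of characteristic
zero with a (finite, exhaustive) increasing filtration `W`, and `N` a nilpotent endomorphism
preserving `W`.  If the relative weight filtration `M = M(N, W)` exists, it is unique. -/
theorem stmt18 (K V : Type*) [Field K] [CharZero K] [AddCommGroup V] [Module K V]
    [FiniteDimensional K V]
    (N : Module.End K V) (hN : IsNilpotent N)
    (W : ℤ → Submodule K V) (hWmono : Monotone W)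
    (hWbot : ∃ a, ∀ k ≤ a, W k = ⊥) (hWtop : ∃ b, ∀ k, b ≤ k → W k = ⊤)
    (hNW : ∀ k, (W k).map N ≤ W k)
    (M M' : ℤ → Submodule K V)
    (hM : IsRelWeightFiltration N W M) (hM' : IsRelWeightFiltration N W M') :
    M = M' := by
  obtain ⟨aW, haW⟩ := hWbot
  obtain ⟨bW, hbW⟩ := hWtop
  have h1 := oneSide N W aW haW hNW M M' hM hM'
  have h2 := oneSide N W aW haW hNW M' M hM' hM
  funext j
  apply le_antisymm
  · intro x hx
    exact h1 bW j ⟨hx, by rw [hbW bW le_rfl]; exact Submodule.mem_top⟩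
  · intro x hx
    exact h2 bW j ⟨hx, by rw [hbW bW le_rfl]; exact Submodule.mem_top⟩
end
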